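/- arXiv:2304.00816 — 7 statements merged into one kernel-verified Lean document; each statement's English description precedes it below -/
import Mathlib

section
/- Let p be a prime and let f : ℤ_p → ℚ_p be strictly differentiable on ℤ_p, i.e. there is a continuous function g : ℤ_p × ℤ_p → ℚ_p with f(x) − f(y) = (x−y)·g(x,y) for all x, y ∈ ℤ_p; write f'(x) = g(x,x). Let k be a positive integer. Then the Volkenborn integrals of t ↦ f(t+k) and of f both exist, and ∫_{ℤ_p} f(t+k) dt = ∫_{ℤ_p} f(t) dt + ∑_{ℓ=0}^{k−1} f'(ℓ). -/
open Filter Finset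

namespace VolkAux

lemma sum_range_mul' {M : Type*} [AddCommMonoid M] (f : ℕ → M) (a b : ℕ) :
    ∑ i ∈ range (a * b), f i = ∑ q ∈ range a, ∑ r ∈ range b, f (q * b + r) := by
  induction a with
  | zero => simp
  | succ a ih =>
    rw [Nat.succ_mul, Finset.sum_range_add, ih, Finset.sum_range_succ]

variable {p : ℕ} [hp : Fact p.Prime]

lemma cauchySeq_of_diff {u : ℕ → ℚ_[p]}
    (h : Tendsto (fun n => u (n + 1) - u n) atTop (nhds 0)) : CauchySeq u := by
  rw [Metric.cauchySeq_iff']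
  intro ε hε
  obtain ⟨N, hN⟩ := eventually_atTop.mp (NormedAddCommGroup.tendsto_nhds_zero.mp h ε hε)
  refine ⟨N, fun n hn => ?_⟩
  rw [dist_eq_norm]
  induction n, hn using Nat.le_induction with
  | base => simpa using hε
  | succ n hn ih =>
    have e : u (n + 1) - u N = (u (n + 1) - u n) + (u n - u N) := by ring
    rw [e]
    exact lt_of_le_of_lt (IsUltrametricDist.norm_add_le_max _ _) (max_lt (hN n hn) ih)

lemma norm_natCast_le_one (n : ℕ) : ‖(n : ℚ_[p])‖ ≤ 1 := by
  simpa using Padic.norm_int_le_one (p := p) (n : ℤ)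

lemma norm_p_pow_int (N : ℕ) : ‖((p:ℤ_[p])) ^ N‖ = ((p:ℝ)⁻¹) ^ N := by
  rw [PadicInt.norm_p_pow, inv_pow, ← zpow_natCast (p:ℝ), ← zpow_neg]

lemma tendsto_sum_zero (h : ℤ_[p] → ℚ_[p]) (hh : Continuous h) :
    Tendsto (fun M : ℕ => ∑ j ∈ range (p ^ M), h (j : ℤ_[p])) atTop (nhds 0) := by
  have hp1 : (1:ℝ) < p := by exact_mod_cast hp.out.one_lt
  have hpinv : (p : ℝ)⁻¹ < 1 := inv_lt_one_of_one_lt₀ hp1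
  have hpos : (0:ℝ) < (p:ℝ)⁻¹ := by positivity
  rw [NormedAddCommGroup.tendsto_nhds_zero]
  intro ε hε
  have huc : UniformContinuous h := CompactSpace.uniformContinuous_of_continuous hh
  obtain ⟨δ, hδ, hδ'⟩ := Metric.uniformContinuous_iff.mp huc (ε/2) (by positivity)
  obtain ⟨N, hN⟩ := exists_pow_lt_of_lt_one hδ hpinv
  set S : ℚ_[p] := ∑ r ∈ range (p ^ N), h (r : ℤ_[p]) with hS
  obtain ⟨K, hK⟩ := exists_pow_lt_of_lt_one (x := ε / (‖S‖ + 1)) (by positivity) hpinv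
  rw [eventually_atTop]
  refine ⟨N + K, fun M hM => ?_⟩
  have hMN : N ≤ M := le_trans (Nat.le_add_right _ _) hM
  have hKMN : K ≤ M - N := by omega
  have e1 : p ^ M = p ^ (M - N) * p ^ N := by rw [← pow_add, Nat.sub_add_cancel hMN]
  have hsplit : ∑ j ∈ range (p ^ M), h (j : ℤ_[p])
      = (p:ℚ_[p]) ^ (M - N) * S
        + ∑ q ∈ range (p ^ (M - N)), ∑ r ∈ range (p ^ N),
            (h ((q * p ^ N + r : ℕ) : ℤ_[p]) - h (r : ℤ_[p])) := by
    rw [e1, sum_range_mul' (fun i : ℕ => h (i : ℤ_[p]))]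
    have step : ∀ q ∈ range (p ^ (M - N)),
        ∑ r ∈ range (p ^ N), h ((q * p ^ N + r : ℕ) : ℤ_[p])
          = S + ∑ r ∈ range (p ^ N), (h ((q * p ^ N + r : ℕ) : ℤ_[p]) - h (r : ℤ_[p])) := by
      intro q _
      rw [Finset.sum_sub_distrib, ← hS]
      ring
    rw [Finset.sum_congr rfl step, Finset.sum_add_distrib, Finset.sum_const,
      Finset.card_range, nsmul_eq_mul]
    push_cast
    ring
  rw [hsplit]
  have hA : ‖(p:ℚ_[p]) ^ (M - N) * S‖ < ε := by
    rw [norm_mul, norm_pow, Padic.norm_p]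
    calc ((p:ℝ)⁻¹) ^ (M - N) * ‖S‖
        ≤ ((p:ℝ)⁻¹) ^ K * (‖S‖ + 1) := by
          apply mul_le_mul (pow_le_pow_of_le_one hpos.le hpinv.le hKMN)
            (by linarith [norm_nonneg S]) (norm_nonneg S) (by positivity)
      _ < ε := (lt_div_iff₀ (by positivity)).mp hK
  have hB : ‖∑ q ∈ range (p ^ (M - N)), ∑ r ∈ range (p ^ N),
      (h ((q * p ^ N + r : ℕ) : ℤ_[p]) - h (r : ℤ_[p]))‖ ≤ ε / 2 := by
    apply IsUltrametricDist.norm_sum_le_of_forall_le_of_nonneg (by positivity)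
    intro q _
    apply IsUltrametricDist.norm_sum_le_of_forall_le_of_nonneg (by positivity)
    intro r _
    rw [← dist_eq_norm]
    refine le_of_lt (hδ' ?_)
    have e2 : ((q * p ^ N + r : ℕ) : ℤ_[p]) - (r : ℤ_[p]) = (q : ℤ_[p]) * (p : ℤ_[p]) ^ N := by
      push_cast; ring
    rw [dist_eq_norm, e2]
    calc ‖(q : ℤ_[p]) * (p : ℤ_[p]) ^ N‖ ≤ ‖(q : ℤ_[p])‖ * ‖(p : ℤ_[p]) ^ N‖ := norm_mul_le _ _
      _ ≤ 1 * ((p:ℝ)⁻¹) ^ N := by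
          rw [norm_p_pow_int]
          exact mul_le_mul_of_nonneg_right (PadicInt.norm_le_one _) (by positivity)
      _ < δ := by rw [one_mul]; exact hN
  exact lt_of_le_of_lt (IsUltrametricDist.norm_add_le_max _ _)
    (max_lt hA (lt_of_le_of_lt hB (by linarith)))

end VolkAux

open VolkAux

set_option maxHeartbeats 1000000

/-- Translation formula for the Volkenborn integral: if `f : ℤ_p → ℚ_p` is strictly
differentiable (witnessed by a continuous difference-quotient function `g`, so that
`f' x = g (x, x)`), then for every positive integer `k` the Volkenborn integrals of
`t ↦ f (t + k)` and of `f` exist and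
`∫ f(t+k) dt = ∫ f(t) dt + ∑_{ℓ=0}^{k-1} f'(ℓ)`. -/
theorem volkenborn_translation
    (p : ℕ) [Fact p.Prime] (f : ℤ_[p] → ℚ_[p]) (g : ℤ_[p] × ℤ_[p] → ℚ_[p])
    (hg : Continuous g)
    (hfg : ∀ x y : ℤ_[p], f x - f y = ((x - y : ℤ_[p]) : ℚ_[p]) * g (x, y))
    (k : ℕ) (hk : 0 < k) :
    ∃ I J : ℚ_[p],
      Filter.Tendsto
        (fun M : ℕ => (p ^ M : ℚ_[p])⁻¹ *
          ∑ i ∈ Finset.range (p ^ M), f ((i : ℤ_[p]) + (k : ℤ_[p])))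
        Filter.atTop (nhds I) ∧
      Filter.Tendsto
        (fun M : ℕ => (p ^ M : ℚ_[p])⁻¹ * ∑ i ∈ Finset.range (p ^ M), f (i : ℤ_[p]))
        Filter.atTop (nhds J) ∧
      I = J + ∑ ℓ ∈ Finset.range k, g ((ℓ : ℤ_[p]), (ℓ : ℤ_[p])) := by
  have hp' : p.Prime := Fact.out
  have hp1 : (1:ℝ) < p := by exact_mod_cast hp'.one_lt
  have hpinv : (p : ℝ)⁻¹ < 1 := inv_lt_one_of_one_lt₀ hp1
  have hpQ : (p:ℚ_[p]) ≠ 0 := Nat.cast_ne_zero.mpr hp'.pos.ne'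
  have hpowQ : ∀ M : ℕ, (p:ℚ_[p]) ^ M ≠ 0 := fun M => pow_ne_zero _ hpQ
  set u : ℕ → ℚ_[p] :=
    fun M => (p ^ M : ℚ_[p])⁻¹ * ∑ i ∈ Finset.range (p ^ M), f (i : ℤ_[p]) with hu
  set T : ℕ → ℚ_[p] := fun M => ∑ r ∈ range (p ^ M), g ((r:ℤ_[p]), (r:ℤ_[p])) with hT'
  set E : ℕ → ℚ_[p] := fun M => (p:ℚ_[p])⁻¹ * ∑ q ∈ range p, ∑ r ∈ range (p ^ M),
      (q:ℚ_[p]) * (g (((q * p ^ M + r : ℕ):ℤ_[p]), (r:ℤ_[p])) - g ((r:ℤ_[p]), (r:ℤ_[p]))) with hE'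
  -- difference formula
  have hdiff : ∀ M : ℕ, u (M + 1) - u M
      = ((p:ℚ_[p])⁻¹ * ∑ q ∈ range p, (q:ℚ_[p])) * T M + E M := by
    intro M
    have key : ∀ q r : ℕ, f ((q * p ^ M + r : ℕ):ℤ_[p])
        = f (r:ℤ_[p]) + (q:ℚ_[p]) * (p:ℚ_[p]) ^ M
            * g (((q * p ^ M + r : ℕ):ℤ_[p]), (r:ℤ_[p])) := by
      intro q r
      have h1 := hfg ((q * p ^ M + r : ℕ):ℤ_[p]) (r:ℤ_[p])
      have e2 : ((q * p ^ M + r : ℕ):ℤ_[p]) - (r:ℤ_[p]) = ((q * p ^ M : ℕ) : ℤ_[p]) := by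
        push_cast; ring
      rw [e2] at h1
      have e3 : (((q * p ^ M : ℕ) : ℤ_[p]) : ℚ_[p]) = (q:ℚ_[p]) * (p:ℚ_[p]) ^ M := by
        push_cast; ring
      rw [e3] at h1
      linear_combination h1
    have hsum : ∑ i ∈ range (p ^ (M + 1)), f (i:ℤ_[p])
        = (p:ℚ_[p]) * ∑ r ∈ range (p ^ M), f (r:ℤ_[p])
          + (p:ℚ_[p]) ^ M * ∑ q ∈ range p, ∑ r ∈ range (p ^ M),
              (q:ℚ_[p]) * g (((q * p ^ M + r : ℕ):ℤ_[p]), (r:ℤ_[p])) := by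
      have e1 : p ^ (M + 1) = p * p ^ M := by ring
      rw [e1, sum_range_mul' (fun i : ℕ => f (i:ℤ_[p]))]
      simp only [key]
      rw [Finset.sum_congr rfl (fun q _ => Finset.sum_add_distrib), Finset.sum_add_distrib,
        Finset.sum_const, Finset.card_range, nsmul_eq_mul]
      congr 1
      rw [Finset.mul_sum]
      refine Finset.sum_congr rfl fun q _ => ?_
      rw [Finset.mul_sum]
      exact Finset.sum_congr rfl fun r _ => by ring
    have hW : ∑ q ∈ range p, ∑ r ∈ range (p ^ M),
          (q:ℚ_[p]) * g (((q * p ^ M + r : ℕ):ℤ_[p]), (r:ℤ_[p]))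
        = (∑ q ∈ range p, (q:ℚ_[p])) * T M
          + ∑ q ∈ range p, ∑ r ∈ range (p ^ M),
              (q:ℚ_[p]) * (g (((q * p ^ M + r : ℕ):ℤ_[p]), (r:ℤ_[p]))
                - g ((r:ℤ_[p]), (r:ℤ_[p]))) := by
      rw [Finset.sum_mul, ← Finset.sum_add_distrib]
      refine sum_congr rfl fun q _ => ?_
      rw [hT', Finset.mul_sum, ← Finset.sum_add_distrib]
      exact sum_congr rfl fun r _ => by ring
    simp only [hu, hE']
    rw [hsum, hW]
    field_simp
    ring
  -- T → 0
  have hT : Tendsto T atTop (nhds 0) := by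
    rw [hT']
    exact tendsto_sum_zero _ (hg.comp (continuous_id.prodMk continuous_id))
  -- E → 0
  have hE : Tendsto E atTop (nhds 0) := by
    rw [NormedAddCommGroup.tendsto_nhds_zero]
    intro ε hε
    have huc : UniformContinuous g := CompactSpace.uniformContinuous_of_continuous hg
    have hε' : (0:ℝ) < ε / (2 * p) := by positivity
    obtain ⟨δ, hδ, hδ'⟩ := Metric.uniformContinuous_iff.mp huc (ε / (2 * p)) hε'
    obtain ⟨M₀, hM₀⟩ := exists_pow_lt_of_lt_one hδ hpinv
    rw [eventually_atTop]
    refine ⟨M₀, fun M hM => ?_⟩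
    have hnorm : ‖E M‖ ≤ (p:ℝ) * (ε / (2 * p)) := by
      rw [hE']
      simp only []
      rw [norm_mul, norm_inv, Padic.norm_p, inv_inv]
      apply mul_le_mul_of_nonneg_left ?_ (by positivity)
      apply IsUltrametricDist.norm_sum_le_of_forall_le_of_nonneg (le_of_lt hε')
      intro q _
      apply IsUltrametricDist.norm_sum_le_of_forall_le_of_nonneg (le_of_lt hε')
      intro r _
      rw [norm_mul]
      calc ‖(q:ℚ_[p])‖ * ‖g (((q * p ^ M + r : ℕ):ℤ_[p]), (r:ℤ_[p]))
            - g ((r:ℤ_[p]), (r:ℤ_[p]))‖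
          ≤ 1 * (ε / (2 * p)) := by
            apply mul_le_mul (norm_natCast_le_one q) ?_ (norm_nonneg _) zero_le_one
            rw [← dist_eq_norm]
            refine le_of_lt (hδ' ?_)
            rw [Prod.dist_eq]
            simp only [dist_self]
            rw [max_eq_left dist_nonneg, dist_eq_norm]
            have e2 : ((q * p ^ M + r : ℕ):ℤ_[p]) - (r:ℤ_[p])
                = (q:ℤ_[p]) * (p:ℤ_[p]) ^ M := by push_cast; ring
            rw [e2]
            calc ‖(q:ℤ_[p]) * (p:ℤ_[p]) ^ M‖ ≤ ‖(q:ℤ_[p])‖ * ‖(p:ℤ_[p]) ^ M‖ := norm_mul_le _ _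
              _ ≤ 1 * ((p:ℝ)⁻¹) ^ M := by
                  rw [norm_p_pow_int]
                  exact mul_le_mul_of_nonneg_right (PadicInt.norm_le_one _) (by positivity)
              _ ≤ ((p:ℝ)⁻¹) ^ M₀ := by
                  rw [one_mul]
                  exact pow_le_pow_of_le_one (by positivity) hpinv.le hM
              _ < δ := hM₀
        _ = ε / (2 * p) := one_mul _
    calc ‖E M‖ ≤ (p:ℝ) * (ε / (2 * p)) := hnorm
      _ = ε / 2 := by field_simp
      _ < ε := by linarith
  -- convergence of u
  have hD : Tendsto (fun M => u (M + 1) - u M) atTop (nhds 0) := by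
    have h0 := (hT.const_mul ((p:ℚ_[p])⁻¹ * ∑ q ∈ range p, (q:ℚ_[p]))).add hE
    rw [mul_zero, zero_add] at h0
    exact h0.congr fun M => (hdiff M).symm
  obtain ⟨J, hJ⟩ := cauchySeq_tendsto_of_complete (cauchySeq_of_diff hD)
  -- translation identity
  have hA : ∀ M : ℕ, (p ^ M : ℚ_[p])⁻¹ *
        ∑ i ∈ Finset.range (p ^ M), f ((i : ℤ_[p]) + (k : ℤ_[p]))
      = u M + ∑ ℓ ∈ range k, g (((p ^ M + ℓ : ℕ):ℤ_[p]), (ℓ:ℤ_[p])) := by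
    intro M
    have cast1 : ∀ i : ℕ, (i:ℤ_[p]) + (k:ℤ_[p]) = ((i + k : ℕ) : ℤ_[p]) := by
      intro i; push_cast; ring
    have shift : ∑ i ∈ range (p ^ M), f ((i + k : ℕ):ℤ_[p])
        = ∑ i ∈ range (p ^ M), f (i:ℤ_[p])
          + ∑ ℓ ∈ range k, (f ((p ^ M + ℓ : ℕ):ℤ_[p]) - f (ℓ:ℤ_[p])) := by
      have h1 : ∑ i ∈ range (k + p ^ M), f (i:ℤ_[p])
          = ∑ i ∈ range k, f (i:ℤ_[p]) + ∑ i ∈ range (p ^ M), f ((k + i : ℕ):ℤ_[p]) :=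
        Finset.sum_range_add _ _ _
      have h2 : ∑ i ∈ range (p ^ M + k), f (i:ℤ_[p])
          = ∑ i ∈ range (p ^ M), f (i:ℤ_[p]) + ∑ ℓ ∈ range k, f ((p ^ M + ℓ : ℕ):ℤ_[p]) :=
        Finset.sum_range_add _ _ _
      have h5 : ∑ i ∈ range k, f (i:ℤ_[p]) + ∑ i ∈ range (p ^ M), f ((k + i : ℕ):ℤ_[p])
          = ∑ i ∈ range (p ^ M), f (i:ℤ_[p])
            + ∑ ℓ ∈ range k, f ((p ^ M + ℓ : ℕ):ℤ_[p]) := by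
        rw [← h1, Nat.add_comm k (p ^ M), h2]
      have h4 : ∑ i ∈ range (p ^ M), f ((i + k : ℕ):ℤ_[p])
          = ∑ i ∈ range (p ^ M), f ((k + i : ℕ):ℤ_[p]) := by
        refine sum_congr rfl fun i _ => by rw [Nat.add_comm]
      rw [h4, Finset.sum_sub_distrib]
      linear_combination h5
    have key2 : ∀ ℓ ∈ range k, f ((p ^ M + ℓ : ℕ):ℤ_[p]) - f (ℓ:ℤ_[p])
        = (p:ℚ_[p]) ^ M * g (((p ^ M + ℓ : ℕ):ℤ_[p]), (ℓ:ℤ_[p])) := by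
      intro ℓ _
      have h1 := hfg ((p ^ M + ℓ : ℕ):ℤ_[p]) (ℓ:ℤ_[p])
      have e2 : ((p ^ M + ℓ : ℕ):ℤ_[p]) - (ℓ:ℤ_[p]) = ((p ^ M : ℕ):ℤ_[p]) := by
        push_cast; ring
      rw [e2] at h1
      rw [h1]; push_cast; ring
    simp only [cast1]
    rw [shift, Finset.sum_congr rfl key2, ← Finset.mul_sum, mul_add, ← mul_assoc,
      inv_mul_cancel₀ (hpowQ M), one_mul, hu]
  -- correction converges
  have hcorr : Tendsto (fun M : ℕ => ∑ ℓ ∈ range k, g (((p ^ M + ℓ : ℕ):ℤ_[p]), (ℓ:ℤ_[p])))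
      atTop (nhds (∑ ℓ ∈ range k, g ((ℓ:ℤ_[p]), (ℓ:ℤ_[p])))) := by
    apply tendsto_finset_sum
    intro ℓ _
    have hp0 : Tendsto (fun M : ℕ => (p:ℤ_[p]) ^ M) atTop (nhds 0) := by
      apply tendsto_pow_atTop_nhds_zero_of_norm_lt_one
      rw [PadicInt.norm_p]
      exact inv_lt_one_of_one_lt₀ hp1
    have h1 : Tendsto (fun M : ℕ => ((((p ^ M + ℓ : ℕ):ℤ_[p])), ((ℓ:ℕ):ℤ_[p])))
        atTop (nhds ((ℓ:ℤ_[p]), (ℓ:ℤ_[p]))) := by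
      have e : ∀ M : ℕ, ((p ^ M + ℓ : ℕ):ℤ_[p]) = (p:ℤ_[p]) ^ M + (ℓ:ℤ_[p]) := by
        intro M; push_cast; ring
      refine Tendsto.prodMk_nhds ?_ tendsto_const_nhds
      simp only [e]
      simpa using hp0.add (tendsto_const_nhds (x := (ℓ:ℤ_[p])))
    exact ((hg.tendsto _).comp h1)
  refine ⟨J + ∑ ℓ ∈ Finset.range k, g ((ℓ : ℤ_[p]), (ℓ : ℤ_[p])), J, ?_, hJ, rfl⟩
  exact (hJ.add hcorr).congr fun M => (hA M).symm
end

section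
/- Let p be a prime and let f : ℤ_p → ℚ_p be strictly differentiable on ℤ_p (so that its Volkenborn integral exists). For a positive integer k with p-adic expansion k = a₀ + a₁p + ⋯ + a_l p^l (digits a_i ∈ {0,…,p−1}, a_l ≠ 0), write k₋ = k − a_l p^l for the integer obtained by deleting the leading digit. Let m ≥ 0 be an integer and c ∈ ℤ, and suppose that v_p( (f(k) − f(k₋)) / (k − k₋) ) ≥ c for every integer k ≥ p^m. Then ∫_{ℤ_p} f(t) dt − p^{−m} · ∑_{k=0}^{p^m−1} f(k) ∈ p^{c−1} ℤ_p. -/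
open Filter Finset

/-- For a positive integer `k`, `kMinus p k` is the integer obtained by deleting the
leading digit of the base-`p` expansion of `k`. -/
def kMinus (p k : ℕ) : ℕ := k % p ^ (Nat.log p k)

private lemma sum_range_mul_aux {β : Type*} [AddCommMonoid β] (F : ℕ → β) (b n : ℕ) :
    ∑ i ∈ Finset.range (b * n), F i
      = ∑ j ∈ Finset.range n, ∑ a ∈ Finset.range b, F (a * n + j) := by
  induction b with
  | zero => simp
  | succ b ih =>
      rw [Nat.succ_mul, Finset.sum_range_add, ih, ← Finset.sum_add_distrib]
      exact Finset.sum_congr rfl fun j hj => by rw [Finset.sum_range_succ, add_comm (b*n) j]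

/-- If `f : ℤ_p → ℚ_p` is strictly differentiable and the difference quotients
`(f(k) - f(k₋))/(k - k₋)` have `p`-adic valuation at least `c` for all integers
`k ≥ p^m`, then the Volkenborn integral of `f` exists and differs from the partial
sum `p^{-m} ∑_{k=0}^{p^m-1} f(k)` by an element of `p^{c-1} ℤ_p`. -/
theorem volkenborn_integral_congruence
    (p : ℕ) [Fact p.Prime] (f : ℤ_[p] → ℚ_[p]) (g : ℤ_[p] × ℤ_[p] → ℚ_[p])
    (hg : Continuous g)
    (hfg : ∀ x y : ℤ_[p], f x - f y = ((x - y : ℤ_[p]) : ℚ_[p]) * g (x, y))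
    (m : ℕ) (c : ℤ)
    (hval : ∀ k : ℕ, p ^ m ≤ k →
      ‖(f (k : ℤ_[p]) - f ((kMinus p k : ℕ) : ℤ_[p])) /
          ((k : ℚ_[p]) - ((kMinus p k : ℕ) : ℚ_[p]))‖ ≤ (p : ℝ) ^ (-c)) :
    ∃ I : ℚ_[p],
      Filter.Tendsto
        (fun M : ℕ => (p ^ M : ℚ_[p])⁻¹ * ∑ i ∈ Finset.range (p ^ M), f (i : ℤ_[p]))
        Filter.atTop (nhds I) ∧
      ‖I - (p ^ m : ℚ_[p])⁻¹ * ∑ k ∈ Finset.range (p ^ m), f (k : ℤ_[p])‖ ≤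
        (p : ℝ) ^ (-(c - 1)) := by
  have hp : p.Prime := Fact.out
  have hp1 : 1 < p := hp.one_lt
  have hq0 : ((p : ℚ_[p])) ≠ 0 := Nat.cast_ne_zero.2 hp.pos.ne'
  set S : ℕ → ℚ_[p] := fun M => (p ^ M : ℚ_[p])⁻¹ * ∑ i ∈ Finset.range (p ^ M), f (i : ℤ_[p])
    with hSdef
  -- the basic difference identity
  have hdiff : ∀ M : ℕ, S (M + 1) - S M
      = ((p : ℚ_[p]) ^ (M + 1))⁻¹ *
        ∑ j ∈ Finset.range (p ^ M), ∑ a ∈ Finset.range p,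
          (f ((a * p ^ M + j : ℕ) : ℤ_[p]) - f ((j : ℕ) : ℤ_[p])) := by
    intro M
    have hre := sum_range_mul_aux (fun i => f (i : ℤ_[p])) p (p ^ M)
    simp only [hSdef]
    rw [pow_succ' (p : ℚ_[p]) M]
    rw [show p ^ (M + 1) = p * p ^ M from pow_succ' p M, hre]
    simp only [Finset.sum_sub_distrib, Finset.sum_const, Finset.card_range, nsmul_eq_mul]
    rw [mul_sub, mul_inv]
    congr 1
    rw [← Finset.mul_sum, mul_comm ((p:ℚ_[p]))⁻¹, mul_assoc, inv_mul_cancel_left₀ hq0]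
  have hstep : ∀ M : ℕ, m ≤ M → ‖S (M + 1) - S M‖ ≤ (p : ℝ) ^ (1 - c) := by
    intro M hM
    rw [hdiff M]
    have hps : (0:ℝ) ≤ (p:ℝ) := Nat.cast_nonneg p
    have hbound : ∀ j ∈ Finset.range (p ^ M), ‖∑ a ∈ Finset.range p,
        (f ((a * p ^ M + j : ℕ) : ℤ_[p]) - f ((j : ℕ) : ℤ_[p]))‖ ≤ (p:ℝ) ^ (-c - M) := by
      intro j hj
      apply IsUltrametricDist.norm_sum_le_of_forall_le_of_nonneg
        (zpow_nonneg hps _)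
      intro a ha
      rcases Nat.eq_zero_or_pos a with rfl | ha0
      · simpa using zpow_nonneg hps (-c - M)
      have hjlt : j < p ^ M := Finset.mem_range.1 hj
      have halt : a < p := Finset.mem_range.1 ha
      set k := a * p ^ M + j with hk
      have hk1 : p ^ M ≤ k := le_add_right (Nat.le_mul_of_pos_left _ ha0)
      have hk2 : k < p ^ (M + 1) := by
        calc k < a * p ^ M + p ^ M := by omega
        _ = (a + 1) * p ^ M := by ring
        _ ≤ p * p ^ M := Nat.mul_le_mul_right _ (by omega)
        _ = p ^ (M + 1) := (pow_succ' p M).symm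
      have hlog : Nat.log p k = M := Nat.log_eq_of_pow_le_of_lt_pow hk1 hk2
      have hkm : kMinus p k = j := by
        rw [kMinus, hlog, hk, mul_comm, Nat.mul_add_mod, Nat.mod_eq_of_lt hjlt]
      have hv := hval k (le_trans (Nat.pow_le_pow_right hp.pos hM) hk1)
      rw [hkm] at hv
      have hd : ((k:ℚ_[p]) - ((j:ℕ):ℚ_[p])) = ((a:ℕ):ℚ_[p]) * (p:ℚ_[p]) ^ M := by
        rw [hk]; push_cast; ring
      have hd0 : ((k:ℚ_[p]) - ((j:ℕ):ℚ_[p])) ≠ 0 := by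
        rw [hd]
        exact mul_ne_zero (Nat.cast_ne_zero.2 ha0.ne') (pow_ne_zero _ hq0)
      have heq : f ((k:ℕ) : ℤ_[p]) - f ((j:ℕ) : ℤ_[p])
          = ((f (k : ℤ_[p]) - f ((j:ℕ) : ℤ_[p])) / ((k:ℚ_[p]) - ((j:ℕ):ℚ_[p])))
            * ((k:ℚ_[p]) - ((j:ℕ):ℚ_[p])) := (div_mul_cancel₀ _ hd0).symm
      rw [heq, norm_mul]
      have hnd : ‖(k:ℚ_[p]) - ((j:ℕ):ℚ_[p])‖ ≤ (p:ℝ) ^ (-(M:ℤ)) := by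
        rw [hd, norm_mul, Padic.norm_p_pow]
        have h1 : ‖((a:ℕ):ℚ_[p])‖ ≤ 1 := by
          rw [← Int.cast_natCast]; exact Padic.norm_int_le_one _
        calc ‖((a:ℕ):ℚ_[p])‖ * (p:ℝ) ^ (-(M:ℤ)) ≤ 1 * (p:ℝ) ^ (-(M:ℤ)) :=
              mul_le_mul_of_nonneg_right h1 (zpow_nonneg hps _)
        _ = (p:ℝ) ^ (-(M:ℤ)) := one_mul _
      calc ‖(f (k : ℤ_[p]) - f ((j:ℕ) : ℤ_[p])) / ((k:ℚ_[p]) - ((j:ℕ):ℚ_[p]))‖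
            * ‖(k:ℚ_[p]) - ((j:ℕ):ℚ_[p])‖ ≤ (p:ℝ) ^ (-c) * (p:ℝ) ^ (-(M:ℤ)) :=
          mul_le_mul hv hnd (norm_nonneg _) (zpow_nonneg hps _)
      _ = (p:ℝ) ^ (-c - M) := by
          rw [← zpow_add₀ (by positivity : (p:ℝ) ≠ 0)]; ring_nf
    have houter : ‖∑ j ∈ Finset.range (p ^ M), ∑ a ∈ Finset.range p,
        (f ((a * p ^ M + j : ℕ) : ℤ_[p]) - f ((j : ℕ) : ℤ_[p]))‖ ≤ (p:ℝ) ^ (-c - M) :=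
      IsUltrametricDist.norm_sum_le_of_forall_le_of_nonneg (zpow_nonneg hps _) hbound
    rw [norm_mul, norm_inv, Padic.norm_p_pow, ← zpow_neg, neg_neg]
    calc (p:ℝ) ^ ((M+1 : ℕ) : ℤ) * ‖∑ j ∈ Finset.range (p ^ M), ∑ a ∈ Finset.range p,
        (f ((a * p ^ M + j : ℕ) : ℤ_[p]) - f ((j : ℕ) : ℤ_[p]))‖
        ≤ (p:ℝ) ^ ((M+1 : ℕ) : ℤ) * (p:ℝ) ^ (-c - M) :=
          mul_le_mul_of_nonneg_left houter (zpow_nonneg hps _)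
    _ = (p:ℝ) ^ (1 - c) := by
        rw [← zpow_add₀ (by positivity : (p:ℝ) ≠ 0)]
        congr 1
        push_cast
        ring
  have hps : (0:ℝ) ≤ (p:ℝ) := Nat.cast_nonneg p
  have hpr0 : (0:ℝ) < (p:ℝ) := by exact_mod_cast hp.pos
  have hpr1 : (1:ℝ) < (p:ℝ) := by exact_mod_cast hp1
  set h : ℤ_[p] → ℚ_[p] := fun x => g (x, x) with hhdef
  have hh : Continuous h := hg.comp (continuous_id.prodMk continuous_id)
  -- partial sums of a continuous function tend to zero
  have hT : Tendsto (fun M : ℕ => ∑ j ∈ Finset.range (p ^ M), h ((j : ℕ) : ℤ_[p]))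
      atTop (nhds 0) := by
    rw [NormedAddCommGroup.tendsto_nhds_zero]
    intro ε hε
    have hhu : UniformContinuous h := CompactSpace.uniformContinuous_of_continuous hh
    obtain ⟨δ, hδ0, hδ⟩ := Metric.uniformContinuous_iff.1 hhu (ε / 2) (by positivity)
    have hzpow : Tendsto (fun L : ℕ => (p:ℝ) ^ (-(L:ℤ))) atTop (nhds 0) := by
      simp only [zpow_neg, zpow_natCast, ← inv_pow]
      exact tendsto_pow_atTop_nhds_zero_of_lt_one (by positivity)
        (inv_lt_one_of_one_lt₀ hpr1)
    obtain ⟨L, hL⟩ := (hzpow.eventually_lt_const hδ0).exists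
    set B := ‖∑ j ∈ Finset.range (p ^ L), h ((j : ℕ) : ℤ_[p])‖ with hBdef
    obtain ⟨K, hK⟩ := ((hzpow.mul_const B).eventually_lt_const
      (by simpa using hε)).exists
    filter_upwards [eventually_ge_atTop (L + K)] with M hM
    have hLM : L ≤ M := le_trans (Nat.le_add_right _ _) hM
    -- reindex identity
    have hid : (∑ j ∈ Finset.range (p ^ M), h ((j : ℕ) : ℤ_[p]))
        = (p : ℚ_[p]) ^ (M - L) * (∑ j ∈ Finset.range (p ^ L), h ((j : ℕ) : ℤ_[p]))
          + ∑ j ∈ Finset.range (p ^ L), ∑ t ∈ Finset.range (p ^ (M - L)),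
              (h ((t * p ^ L + j : ℕ) : ℤ_[p]) - h ((j : ℕ) : ℤ_[p])) := by
      rw [show p ^ M = p ^ (M - L) * p ^ L by rw [← pow_add]; congr 1; omega,
        sum_range_mul_aux (fun i => h ((i:ℕ) : ℤ_[p])) (p ^ (M - L)) (p ^ L),
        Finset.mul_sum, ← Finset.sum_add_distrib]
      refine Finset.sum_congr rfl fun j _ => ?_
      rw [Finset.sum_sub_distrib, Finset.sum_const, Finset.card_range, nsmul_eq_mul]
      push_cast
      ring
    rw [hid]
    refine lt_of_le_of_lt (IsUltrametricDist.norm_add_le_max _ _) (max_lt ?_ ?_)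
    · rw [norm_mul, Padic.norm_p_pow]
      calc (p:ℝ) ^ (-((M - L : ℕ):ℤ)) * B ≤ (p:ℝ) ^ (-(K:ℤ)) * B := by
            apply mul_le_mul_of_nonneg_right _ (norm_nonneg _)
            exact zpow_le_zpow_right₀ hpr1.le (by omega)
      _ < ε := hK
    · have hE : ‖∑ j ∈ Finset.range (p ^ L), ∑ t ∈ Finset.range (p ^ (M - L)),
          (h ((t * p ^ L + j : ℕ) : ℤ_[p]) - h ((j : ℕ) : ℤ_[p]))‖ ≤ ε / 2 := by
        refine IsUltrametricDist.norm_sum_le_of_forall_le_of_nonneg (by positivity)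
          fun j hj => ?_
        refine IsUltrametricDist.norm_sum_le_of_forall_le_of_nonneg (by positivity)
          fun t ht => ?_
        have hdist : dist (((t * p ^ L + j : ℕ) : ℤ_[p])) (((j : ℕ)) : ℤ_[p]) < δ := by
          rw [dist_eq_norm]
          have he : ((t * p ^ L + j : ℕ) : ℤ_[p]) - ((j : ℕ) : ℤ_[p])
              = (t : ℤ_[p]) * (p : ℤ_[p]) ^ L := by push_cast; ring
          rw [he, norm_mul]
          calc ‖(t : ℤ_[p])‖ * ‖(p : ℤ_[p]) ^ L‖ ≤ 1 * ‖(p : ℤ_[p]) ^ L‖ :=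
                mul_le_mul_of_nonneg_right (PadicInt.norm_le_one _) (norm_nonneg _)
          _ = (p:ℝ) ^ (-(L:ℤ)) := by rw [one_mul, PadicInt.norm_p_pow]
          _ < δ := hL
        have h2 := hδ hdist
        rw [dist_eq_norm] at h2
        exact h2.le
      exact lt_of_le_of_lt hE (by linarith)
  -- key decomposition of the consecutive difference
  have hkey : ∀ M : ℕ, S (M + 1) - S M
      = ((p:ℚ_[p])⁻¹ * ∑ a ∈ Finset.range p, (a : ℚ_[p]))
          * (∑ j ∈ Finset.range (p ^ M), h ((j : ℕ) : ℤ_[p]))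
        + (p:ℚ_[p])⁻¹ * ∑ j ∈ Finset.range (p ^ M), ∑ a ∈ Finset.range p,
            (a : ℚ_[p]) * (g (((a * p ^ M + j : ℕ) : ℤ_[p]), ((j : ℕ) : ℤ_[p]))
              - h ((j : ℕ) : ℤ_[p])) := by
    intro M
    rw [hdiff M]
    have hterm : ∀ j a : ℕ, f ((a * p ^ M + j : ℕ) : ℤ_[p]) - f ((j : ℕ) : ℤ_[p])
        = (p:ℚ_[p]) ^ M * ((a : ℚ_[p])
            * g (((a * p ^ M + j : ℕ) : ℤ_[p]), ((j : ℕ) : ℤ_[p]))) := by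
      intro j a
      rw [hfg]
      have he : ((((a * p ^ M + j : ℕ) : ℤ_[p]) - ((j : ℕ) : ℤ_[p]) : ℤ_[p]) : ℚ_[p])
          = (a : ℚ_[p]) * (p : ℚ_[p]) ^ M := by push_cast; ring
      rw [he]; ring
    simp only [hterm, ← Finset.mul_sum]
    rw [show ((p:ℚ_[p]) ^ (M + 1))⁻¹ * ((p:ℚ_[p]) ^ M * ∑ j ∈ Finset.range (p ^ M),
        ∑ a ∈ Finset.range p, (a : ℚ_[p])
          * g (((a * p ^ M + j : ℕ) : ℤ_[p]), ((j : ℕ) : ℤ_[p])))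
        = (p:ℚ_[p])⁻¹ * ∑ j ∈ Finset.range (p ^ M), ∑ a ∈ Finset.range p, (a : ℚ_[p])
          * g (((a * p ^ M + j : ℕ) : ℤ_[p]), ((j : ℕ) : ℤ_[p])) by
      rw [pow_succ, mul_inv, mul_comm ((p:ℚ_[p]) ^ M)⁻¹ ((p:ℚ_[p]))⁻¹, mul_assoc,
        inv_mul_cancel_left₀ (pow_ne_zero _ hq0)]]
    rw [mul_assoc, ← mul_add]
    congr 1
    have hsplit : ∀ j a : ℕ, (a : ℚ_[p])
        * g (((a * p ^ M + j : ℕ) : ℤ_[p]), ((j : ℕ) : ℤ_[p]))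
        = (a : ℚ_[p]) * h ((j : ℕ) : ℤ_[p])
          + (a : ℚ_[p]) * (g (((a * p ^ M + j : ℕ) : ℤ_[p]), ((j : ℕ) : ℤ_[p]))
              - h ((j : ℕ) : ℤ_[p])) := by intro j a; ring
    simp only [hsplit, Finset.sum_add_distrib]
    congr 1
    rw [Finset.mul_sum]
    refine Finset.sum_congr rfl fun j _ => ?_
    rw [← Finset.sum_mul]
  -- the error term tends to zero
  have hE2 : Tendsto (fun M : ℕ => (p:ℚ_[p])⁻¹
      * ∑ j ∈ Finset.range (p ^ M), ∑ a ∈ Finset.range p,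
          (a : ℚ_[p]) * (g (((a * p ^ M + j : ℕ) : ℤ_[p]), ((j : ℕ) : ℤ_[p]))
            - h ((j : ℕ) : ℤ_[p]))) atTop (nhds 0) := by
    rw [NormedAddCommGroup.tendsto_nhds_zero]
    intro ε hε
    have hgu : UniformContinuous g := CompactSpace.uniformContinuous_of_continuous hg
    obtain ⟨δ, hδ0, hδ⟩ := Metric.uniformContinuous_iff.1 hgu (ε / (2 * p))
      (by positivity)
    have hzpow : Tendsto (fun L : ℕ => (p:ℝ) ^ (-(L:ℤ))) atTop (nhds 0) := by
      simp only [zpow_neg, zpow_natCast, ← inv_pow]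
      exact tendsto_pow_atTop_nhds_zero_of_lt_one (by positivity)
        (inv_lt_one_of_one_lt₀ hpr1)
    obtain ⟨L, hL⟩ := (hzpow.eventually_lt_const hδ0).exists
    filter_upwards [eventually_ge_atTop L] with M hLM
    have hEb : ‖∑ j ∈ Finset.range (p ^ M), ∑ a ∈ Finset.range p,
        (a : ℚ_[p]) * (g (((a * p ^ M + j : ℕ) : ℤ_[p]), ((j : ℕ) : ℤ_[p]))
          - h ((j : ℕ) : ℤ_[p]))‖ ≤ ε / (2 * p) := by
      refine IsUltrametricDist.norm_sum_le_of_forall_le_of_nonneg (by positivity)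
        fun j hj => ?_
      refine IsUltrametricDist.norm_sum_le_of_forall_le_of_nonneg (by positivity)
        fun a ha => ?_
      have hdist : dist ((((a * p ^ M + j : ℕ) : ℤ_[p]), ((j : ℕ) : ℤ_[p])) :
          ℤ_[p] × ℤ_[p]) (((j : ℕ) : ℤ_[p]), ((j : ℕ) : ℤ_[p])) < δ := by
        rw [Prod.dist_eq]
        have hd2 : dist (((j : ℕ) : ℤ_[p])) (((j : ℕ) : ℤ_[p])) = 0 := dist_self _
        have hd1 : dist (((a * p ^ M + j : ℕ) : ℤ_[p])) (((j : ℕ) : ℤ_[p])) < δ := by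
          rw [dist_eq_norm]
          have he : ((a * p ^ M + j : ℕ) : ℤ_[p]) - ((j : ℕ) : ℤ_[p])
              = (a : ℤ_[p]) * (p : ℤ_[p]) ^ M := by push_cast; ring
          rw [he, norm_mul]
          calc ‖(a : ℤ_[p])‖ * ‖(p : ℤ_[p]) ^ M‖ ≤ 1 * ‖(p : ℤ_[p]) ^ M‖ :=
                mul_le_mul_of_nonneg_right (PadicInt.norm_le_one _) (norm_nonneg _)
          _ = (p:ℝ) ^ (-(M:ℤ)) := by rw [one_mul, PadicInt.norm_p_pow]
          _ ≤ (p:ℝ) ^ (-(L:ℤ)) := zpow_le_zpow_right₀ hpr1.le (by omega)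
          _ < δ := hL
        rw [hd2]
        exact max_lt hd1 hδ0
      have h2 := hδ hdist
      rw [dist_eq_norm] at h2
      rw [norm_mul]
      have h1 : ‖((a:ℕ):ℚ_[p])‖ ≤ 1 := by
        rw [← Int.cast_natCast]; exact Padic.norm_int_le_one _
      calc ‖((a:ℕ):ℚ_[p])‖ * ‖g (((a * p ^ M + j : ℕ) : ℤ_[p]), ((j : ℕ) : ℤ_[p]))
            - h ((j : ℕ) : ℤ_[p])‖ ≤ 1 * (ε / (2 * p)) :=
          mul_le_mul h1 h2.le (norm_nonneg _) zero_le_one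
      _ = ε / (2 * p) := one_mul _
    rw [norm_mul, norm_inv, Padic.norm_p, inv_inv]
    calc (p:ℝ) * ‖∑ j ∈ Finset.range (p ^ M), ∑ a ∈ Finset.range p,
        (a : ℚ_[p]) * (g (((a * p ^ M + j : ℕ) : ℤ_[p]), ((j : ℕ) : ℤ_[p]))
          - h ((j : ℕ) : ℤ_[p]))‖ ≤ (p:ℝ) * (ε / (2 * p)) :=
        mul_le_mul_of_nonneg_left hEb hps
    _ = ε / 2 := by field_simp
    _ < ε := by linarith
  -- the consecutive differences tend to zero
  have hc0 : Tendsto (fun M : ℕ => S (M + 1) - S M) atTop (nhds 0) := by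
    have h1 : Tendsto (fun M : ℕ => ((p:ℚ_[p])⁻¹ * ∑ a ∈ Finset.range p, (a : ℚ_[p]))
        * (∑ j ∈ Finset.range (p ^ M), h ((j : ℕ) : ℤ_[p]))) atTop (nhds 0) := by
      simpa using hT.const_mul ((p:ℚ_[p])⁻¹ * ∑ a ∈ Finset.range p, (a : ℚ_[p]))
    have := h1.add hE2
    rw [add_zero] at this
    exact this.congr fun M => (hkey M).symm
  -- summability and the limit
  have hsum : Summable (fun M : ℕ => S (M + 1) - S M) := by
    refine NonarchimedeanAddGroup.summable_of_tendsto_cofinite_zero ?_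
    rwa [Nat.cofinite_eq_atTop]
  obtain ⟨t, ht⟩ := hsum
  have hconv : Tendsto S atTop (nhds (t + S 0)) := by
    have h2 := ht.tendsto_sum_nat
    have h3 : Tendsto (fun N : ℕ => S N - S 0) atTop (nhds t) := by
      refine h2.congr fun N => ?_
      exact Finset.sum_range_sub S N
    have h4 := h3.add_const (S 0)
    simpa using h4
  refine ⟨t + S 0, hconv, ?_⟩
  have hb : ∀ N : ℕ, m ≤ N → ‖S N - S m‖ ≤ (p:ℝ) ^ (1 - c) := by
    intro N hN
    induction N, hN using Nat.le_induction with
    | base => simpa using zpow_nonneg hps (1 - c)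
    | succ N hmN ih =>
        have he : S (N + 1) - S m = (S (N + 1) - S N) + (S N - S m) := by ring
        rw [he]
        exact le_trans (IsUltrametricDist.norm_add_le_max _ _)
          (max_le (hstep N hmN) ih)
  have hnorm : Tendsto (fun N : ℕ => ‖S N - S m‖) atTop (nhds ‖t + S 0 - S m‖) :=
    (hconv.sub_const (S m)).norm
  have hfinal := le_of_tendsto hnorm (Filter.eventually_atTop.2 ⟨m, hb⟩)
  rw [show -(c - 1) = 1 - c by ring]
  exact hfinal
end

section
/- Let p be a prime, let n be a positive integer and j an integer, and define f : ℤ_p → ℚ_p by the binomial-coefficient polynomial f(t) = C(t+j, n) = (t+j)(t+j−1)⋯(t+j−n+1)/n!. For a positive integer k, let k₋ denote the integer obtained from k by deleting the leading digit of its p-adic expansion. Then: (i) for every positive integer k, v_p( (f(k) − f(k₋)) / (k − k₋) ) ≥ −⌊log n / log p⌋; and (ii) for every integer m > ⌊log n / log p⌋ and every integer k ≥ p^m, v_p( (f(k)^p − f(k₋)^p) / (k − k₋) ) ≥ −⌊log n / log p⌋ + 1. -/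
open Filter Finset

lemma descPoch_eq_prod (z : ℤ) (n : ℕ) :
    (descPochhammer ℤ n).smeval z = ∏ i ∈ Finset.range n, (z - i) := by
  induction n with
  | zero => simp [descPochhammer_zero, Polynomial.smeval_one]
  | succ n ih =>
    rw [descPochhammer_succ_right, Polynomial.smeval_mul, ih, Finset.prod_range_succ]
    congr 1
    simp [Polynomial.smeval_sub, Polynomial.smeval_X, Polynomial.smeval_natCast]

/-- The binomial-coefficient polynomial `t ↦ C(t+j, n)` as a function `ℚ_p → ℚ_p`. -/
noncomputable def binomPoly (p : ℕ) [Fact p.Prime] (j : ℤ) (n : ℕ) (t : ℚ_[p]) : ℚ_[p] :=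
  (∏ i ∈ Finset.range n, (t + (j : ℚ_[p]) - (i : ℚ_[p]))) / (n.factorial : ℚ_[p])

lemma binomPoly_natCast (p : ℕ) [Fact p.Prime] (j : ℤ) (n : ℕ) (k : ℕ) :
    binomPoly p j n (k : ℚ_[p]) = ((Ring.choose ((k : ℤ) + j) n : ℤ) : ℚ_[p]) := by
  have h : (descPochhammer ℤ n).smeval ((k : ℤ) + j) = n.factorial • Ring.choose ((k : ℤ) + j) n :=
    Ring.descPochhammer_eq_factorial_smul_choose _ _
  rw [descPoch_eq_prod, nsmul_eq_mul] at h
  have hprod : (∏ i ∈ Finset.range n, ((k : ℚ_[p]) + (j : ℚ_[p]) - (i : ℚ_[p])))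
      = ((∏ i ∈ Finset.range n, ((k : ℤ) + j - (i : ℤ)) : ℤ) : ℚ_[p]) := by
    push_cast
    rfl
  rw [binomPoly, hprod, h]
  have hfac : ((n.factorial : ℤ) : ℚ_[p]) ≠ 0 := by
    exact_mod_cast (Nat.cast_ne_zero (R := ℚ_[p])).mpr n.factorial_ne_zero
  push_cast
  rw [mul_comm, mul_div_cancel_right₀ _ (by exact_mod_cast hfac)]

lemma pow_dvd_choose' (p : ℕ) (hp : p.Prime) {l s i d : ℕ} (hd : p ^ l ∣ d)
    (hi : 0 < i) (his : Nat.log p i ≤ s) : p ^ (l - s) ∣ d.choose i := by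
  rcases Nat.eq_zero_or_pos (d.choose i) with h0 | h0
  · simp [h0]
  have hdpos : 0 < d := by
    rcases Nat.eq_zero_or_pos d with h | h
    · subst h; rw [Nat.choose_eq_zero_of_lt hi] at h0; omega
    · exact h
  have hid : d * (d - 1).choose (i - 1) = d.choose i * i := by
    have := Nat.add_one_mul_choose_eq (d - 1) (i - 1)
    rw [Nat.sub_add_cancel hdpos, Nat.sub_add_cancel hi] at this
    exact this
  have hdvd : p ^ l ∣ d.choose i * i := hid ▸ hd.trans (dvd_mul_right d _)
  have hne : d.choose i * i ≠ 0 := by positivity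
  have hfac : l ≤ (d.choose i * i).factorization p :=
    (hp.pow_dvd_iff_le_factorization hne).mp hdvd
  rw [Nat.factorization_mul h0.ne' hi.ne', Finsupp.add_apply] at hfac
  have hilog : i.factorization p ≤ s := by
    have h1 : p ^ (i.factorization p) ∣ i := Nat.ordProj_dvd i p
    have h2 : p ^ (i.factorization p) ≤ i := Nat.le_of_dvd hi h1
    exact le_trans ((Nat.le_log_iff_pow_le hp.one_lt hi.ne').mpr h2) his
  exact (hp.pow_dvd_iff_le_factorization h0.ne').mpr (by omega)

lemma choose_sub_dvd (p : ℕ) (hp : p.Prime) {l n : ℕ} (x : ℤ) (d : ℕ) (hd : p ^ l ∣ d) :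
    (p : ℤ) ^ (l - Nat.log p n) ∣ Ring.choose (x + (d : ℤ)) n - Ring.choose x n := by
  rw [Ring.add_choose_eq n (Commute.all _ _)]
  have hmem : ((n, 0) : ℕ × ℕ) ∈ Finset.HasAntidiagonal.antidiagonal n := by simp
  rw [← Finset.sum_erase_add _ _ hmem]
  have h0 : Ring.choose x (n, 0).1 * Ring.choose (d : ℤ) (n, 0).2 = Ring.choose x n := by
    simp [Ring.choose_natCast]
  rw [h0, add_sub_cancel_right]
  apply Finset.dvd_sum
  intro ij hij
  have hmem' := Finset.mem_of_mem_erase hij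
  rw [Finset.HasAntidiagonal.mem_antidiagonal] at hmem'
  have hne : ij ≠ (n, 0) := Finset.ne_of_mem_erase hij
  have hij2 : 0 < ij.2 := by
    rcases Nat.eq_zero_or_pos ij.2 with h | h
    · exfalso; apply hne; have : ij.1 = n := by omega
      exact Prod.ext this h
    · exact h
  rw [Ring.choose_natCast]
  apply Dvd.dvd.mul_left
  have : p ^ (l - Nat.log p n) ∣ d.choose ij.2 :=
    pow_dvd_choose' p hp hd hij2 (Nat.log_mono_right (by omega))
  exact_mod_cast Int.natCast_dvd_natCast.mpr this

lemma main_facts (p : ℕ) [hp : Fact p.Prime] {k : ℕ} (hk : 0 < k) (n : ℕ) (j : ℤ) :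
    ‖(k : ℚ_[p]) - ((kMinus p k : ℕ) : ℚ_[p])‖ = (p : ℝ) ^ (-(Nat.log p k : ℤ)) ∧
    (p : ℤ) ^ (Nat.log p k - Nat.log p n) ∣
      Ring.choose ((k : ℤ) + j) n - Ring.choose ((kMinus p k : ℤ) + j) n := by
  have hp1 : 1 < p := hp.out.one_lt
  set l := Nat.log p k with hl
  set q := k / p ^ l with hq
  have hppos : 0 < p ^ l := Nat.pow_pos hp.out.pos
  have hsplit : p ^ l * q + kMinus p k = k := by
    unfold kMinus
    rw [← hl, hq]
    exact Nat.div_add_mod k (p ^ l)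
  have hq1 : 1 ≤ q := (Nat.one_le_div_iff hppos).mpr (Nat.pow_log_le_self p hk.ne')
  have hq2 : q < p := by
    rw [hq, Nat.div_lt_iff_lt_mul hppos]
    calc k < p ^ (l + 1) := Nat.lt_pow_succ_log_self hp1 k
      _ = p * p ^ l := by ring
  have hcast : (k : ℚ_[p]) - ((kMinus p k : ℕ) : ℚ_[p]) = ((p : ℚ_[p])) ^ l * (q : ℚ_[p]) := by
    have h := congrArg (fun m : ℕ => (m : ℚ_[p])) hsplit
    push_cast at h
    linear_combination -h
  have hqnorm : ‖((q : ℤ) : ℚ_[p])‖ = 1 := by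
    refine le_antisymm (Padic.norm_int_le_one _) (not_lt.mp ?_)
    rw [Padic.norm_intCast_lt_one_iff]
    intro hdvd
    have hle : (p : ℤ) ≤ q := Int.le_of_dvd (by exact_mod_cast hq1) hdvd
    have : p ≤ q := by exact_mod_cast hle
    omega
  constructor
  · rw [hcast, norm_mul, norm_pow, Padic.norm_p]
    have : ((q : ℕ) : ℚ_[p]) = ((q : ℤ) : ℚ_[p]) := by push_cast; rfl
    rw [this, hqnorm, mul_one, inv_pow, ← zpow_natCast, ← zpow_neg]
  · have hd : p ^ l ∣ p ^ l * q := dvd_mul_right _ _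
    have h := choose_sub_dvd p hp.out (n := n) ((kMinus p k : ℤ) + j) (p ^ l * q) hd
    have hkid : ((kMinus p k : ℤ) + j) + ((p ^ l * q : ℕ) : ℤ) = (k : ℤ) + j := by
      have h2 : ((p ^ l * q + kMinus p k : ℕ) : ℤ) = (k : ℤ) := by exact_mod_cast congrArg (fun m : ℕ => (m : ℤ)) hsplit
      push_cast at h2 ⊢
      linarith
    rwa [hkid] at h

/-- Valuation bounds for the difference quotients of `t ↦ C(t+j, n)` and of its
`p`-th power. -/
theorem binomPoly_difference_quotient_valuation
    (p : ℕ) [Fact p.Prime] (n : ℕ) (hn : 0 < n) (j : ℤ) :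
    (∀ k : ℕ, 0 < k →
      ‖(binomPoly p j n (k : ℚ_[p]) - binomPoly p j n ((kMinus p k : ℕ) : ℚ_[p])) /
          ((k : ℚ_[p]) - ((kMinus p k : ℕ) : ℚ_[p]))‖ ≤ (p : ℝ) ^ (Nat.log p n : ℤ)) ∧
    (∀ m : ℕ, Nat.log p n < m → ∀ k : ℕ, p ^ m ≤ k →
      ‖(binomPoly p j n (k : ℚ_[p]) ^ p - binomPoly p j n ((kMinus p k : ℕ) : ℚ_[p]) ^ p) /
          ((k : ℚ_[p]) - ((kMinus p k : ℕ) : ℚ_[p]))‖ ≤ (p : ℝ) ^ ((Nat.log p n : ℤ) - 1)) := by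
  have hp : p.Prime := Fact.out
  have hp1 : 1 < p := hp.one_lt
  have hpR : (1 : ℝ) < (p : ℝ) := by exact_mod_cast hp1
  have hpR0 : (0 : ℝ) < (p : ℝ) := lt_trans one_pos hpR
  constructor
  · intro k hk
    obtain ⟨hden, hdvd⟩ := main_facts p hk n j
    set l := Nat.log p k with hl
    set s := Nat.log p n with hs
    rw [binomPoly_natCast, binomPoly_natCast, ← Int.cast_sub, norm_div, hden]
    have hA : ‖((Ring.choose ((k : ℤ) + j) n - Ring.choose ((kMinus p k : ℤ) + j) n : ℤ) : ℚ_[p])‖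
        ≤ (p : ℝ) ^ (-((l - s : ℕ) : ℤ)) := (Padic.norm_int_le_pow_iff_dvd _ _).mpr hdvd
    calc ‖((Ring.choose ((k : ℤ) + j) n - Ring.choose ((kMinus p k : ℤ) + j) n : ℤ) : ℚ_[p])‖
          / (p : ℝ) ^ (-(l : ℤ))
        ≤ (p : ℝ) ^ (-((l - s : ℕ) : ℤ)) / (p : ℝ) ^ (-(l : ℤ)) := by
          exact (div_le_div_iff_of_pos_right (zpow_pos hpR0 _)).mpr hA
      _ = (p : ℝ) ^ (-((l - s : ℕ) : ℤ) - (-(l : ℤ))) := by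
          rw [← zpow_sub₀ (ne_of_gt hpR0)]
      _ ≤ (p : ℝ) ^ ((s : ℤ)) := zpow_le_zpow_right₀ hpR.le (by omega)
  · intro m hm k hk
    have hk0 : 0 < k := lt_of_lt_of_le (Nat.pow_pos (n := m) hp.pos) hk
    obtain ⟨hden, hdvd⟩ := main_facts p hk0 n j
    set l := Nat.log p k with hl
    set s := Nat.log p n with hs
    have hml : m ≤ l := (Nat.le_log_iff_pow_le hp1 hk0.ne').mpr hk
    have hsl : s < l := lt_of_lt_of_le hm hml
    set A := Ring.choose ((k : ℤ) + j) n with hA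
    set B := Ring.choose ((kMinus p k : ℤ) + j) n with hB
    have hpAB : (p : ℤ) ∣ A - B := by
      refine dvd_trans ?_ hdvd
      have := pow_dvd_pow (p : ℤ) (show 1 ≤ l - s by omega)
      simpa using this
    have hab : ((A : ZMod p)) = (B : ZMod p) := by
      have h0 : ((A - B : ℤ) : ZMod p) = 0 := (ZMod.intCast_zmod_eq_zero_iff_dvd _ _).mpr hpAB
      push_cast at h0
      exact sub_eq_zero.mp h0
    have hS : (p : ℤ) ∣ ∑ i ∈ Finset.range p, A ^ i * B ^ (p - 1 - i) := by
      rw [← ZMod.intCast_zmod_eq_zero_iff_dvd]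
      push_cast
      calc (∑ i ∈ Finset.range p, (A : ZMod p) ^ i * (B : ZMod p) ^ (p - 1 - i))
          = ∑ _i ∈ Finset.range p, (B : ZMod p) ^ (p - 1) := by
            refine Finset.sum_congr rfl fun i hi => ?_
            rw [hab, ← pow_add]
            congr 1
            have := Finset.mem_range.mp hi
            omega
        _ = p • (B : ZMod p) ^ (p - 1) := by rw [Finset.sum_const, Finset.card_range]
        _ = 0 := by rw [nsmul_eq_mul, ZMod.natCast_self, zero_mul]
    have hdvd2 : (p : ℤ) ^ (l - s + 1) ∣ A ^ p - B ^ p := by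
      rw [← geom_sum₂_mul A B p, pow_succ']
      exact mul_dvd_mul hS hdvd
    rw [binomPoly_natCast, binomPoly_natCast, ← Int.cast_pow, ← Int.cast_pow, ← Int.cast_sub,
      norm_div, hden]
    have hAn : ‖((A ^ p - B ^ p : ℤ) : ℚ_[p])‖ ≤ (p : ℝ) ^ (-((l - s + 1 : ℕ) : ℤ)) :=
      (Padic.norm_int_le_pow_iff_dvd _ _).mpr hdvd2
    calc ‖((A ^ p - B ^ p : ℤ) : ℚ_[p])‖ / (p : ℝ) ^ (-(l : ℤ))
        ≤ (p : ℝ) ^ (-((l - s + 1 : ℕ) : ℤ)) / (p : ℝ) ^ (-(l : ℤ)) :=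
          (div_le_div_iff_of_pos_right (zpow_pos hpR0 _)).mpr hAn
      _ = (p : ℝ) ^ (-((l - s + 1 : ℕ) : ℤ) - (-(l : ℤ))) := by
          rw [← zpow_sub₀ (ne_of_gt hpR0)]
      _ ≤ (p : ℝ) ^ ((s : ℤ) - 1) := zpow_le_zpow_right₀ hpR.le (by omega)
end

section
/- Let n and k be integers with 0 ≤ k ≤ n and n ≥ 1, and let q be a prime with √(10n) < q ≤ n such that the fractional part of n/q is greater than 1/2. Then v_q( (4k)! · (4n−4k)! / ( (2k)! · (2n−2k)! · (k!)² · ((n−k)!)² ) ) ≥ 1, where v_q denotes the q-adic valuation of the rational number in question. -/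
private lemma div_decomp (q c x : ℕ) (hq : 0 < q) :
    c * x / q = c * (x / q) + c * (x % q) / q := by
  conv_lhs => rw [← Nat.div_add_mod x q]
  rw [Nat.mul_add, show c * (q * (x / q)) = q * (c * (x / q)) by ring,
    Nat.mul_add_div hq]

private lemma g_lemma (q r : ℕ) (hq : 0 < q) (hr : r < q) (h : q ≤ 4 * r) :
    2 * r / q + 1 ≤ 4 * r / q := by
  rcases lt_or_ge (2 * r) q with h2 | h2
  · rw [Nat.div_eq_of_lt h2]
    simpa using (Nat.one_le_div_iff hq).2 h
  · have e2 : 2 * r / q = 1 := Nat.div_eq_of_lt_le (by omega) (by omega)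
    have e4 : 2 ≤ 4 * r / q := (Nat.le_div_iff_mul_le hq).2 (by omega)
    rw [e2]; exact e4

private lemma key_lemma (q k m : ℕ) (hq : 0 < q)
    (h : q < 2 * (k % q) + 2 * (m % q)) :
    2 * k / q + 2 * m / q + (k / q + k / q + (m / q + m / q)) + 1
      ≤ 4 * k / q + 4 * m / q := by
  have hr : k % q < q := Nat.mod_lt _ hq
  have hs : m % q < q := Nat.mod_lt _ hq
  rw [div_decomp q 2 k hq, div_decomp q 2 m hq, div_decomp q 4 k hq,
    div_decomp q 4 m hq]
  have core : 2 * (k % q) / q + 2 * (m % q) / q + 1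
      ≤ 4 * (k % q) / q + 4 * (m % q) / q := by
    rcases le_or_gt q (4 * (k % q)) with h4 | h4
    · have g1 := g_lemma q (k % q) hq hr h4
      have g2 : 2 * (m % q) / q ≤ 4 * (m % q) / q :=
        Nat.div_le_div_right (by omega)
      calc 2 * (k % q) / q + 2 * (m % q) / q + 1
          = (2 * (k % q) / q + 1) + 2 * (m % q) / q := by ring
        _ ≤ 4 * (k % q) / q + 4 * (m % q) / q := Nat.add_le_add g1 g2
    · have h4' : q ≤ 4 * (m % q) := by omega
      have g1 := g_lemma q (m % q) hq hs h4'
      have g2 : 2 * (k % q) / q ≤ 4 * (k % q) / q :=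
        Nat.div_le_div_right (by omega)
      calc 2 * (k % q) / q + 2 * (m % q) / q + 1
          = 2 * (k % q) / q + (2 * (m % q) / q + 1) := by ring
        _ ≤ 4 * (k % q) / q + 4 * (m % q) / q := Nat.add_le_add g2 g1
  set a := k / q
  set b := m / q
  set u2 := 2 * (k % q) / q
  set v2 := 2 * (m % q) / q
  set u4 := 4 * (k % q) / q
  set v4 := 4 * (m % q) / q
  omega

/-- For `0 ≤ k ≤ n` and a prime `q` with `√(10n) < q ≤ n` and `{n/q} > 1/2`, the
`q`-adic valuation of `(4k)! (4n-4k)! / ((2k)! (2n-2k)! (k!)² ((n-k)!)²)` is at least 1. -/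
theorem valuation_factorial_ratio (n k q : ℕ) (hn : 1 ≤ n) (hk : k ≤ n)
    (hq : q.Prime) (hq1 : Real.sqrt (10 * n) < (q : ℝ)) (hq2 : q ≤ n)
    (hq3 : 1/2 < Int.fract ((n : ℝ) / q)) :
    1 ≤ padicValRat q
      (((4 * k).factorial * (4 * n - 4 * k).factorial : ℚ) /
        ((2 * k).factorial * (2 * n - 2 * k).factorial *
          (k.factorial : ℚ) ^ 2 * ((n - k).factorial : ℚ) ^ 2)) := by
  haveI : Fact q.Prime := ⟨hq⟩
  have hqpos : 0 < q := hq.pos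
  set m := n - k with hm
  have hnm : n = k + m := by omega
  -- q^2 > 10 n
  have hq2sq : 10 * n < q ^ 2 := by
    have h1 : (10 * n : ℝ) < (q : ℝ) ^ 2 := by
      have := (Real.sqrt_lt' (by exact_mod_cast hqpos)).1 hq1
      linarith
    exact_mod_cast h1
  -- fract condition gives q < 2 * (n % q)
  have hfr : q < 2 * (n % q) := by
    have hq0 : (0 : ℝ) < (q : ℝ) := by exact_mod_cast hqpos
    have hsplit : (n : ℝ) / q = (↑(n / q) : ℕ) + (n % q : ℕ) / q := by
      have hc : ((n : ℝ)) = q * (↑(n / q) : ℕ) + (n % q : ℕ) := by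
        exact_mod_cast (Nat.div_add_mod n q).symm
      rw [hc, add_div, mul_div_cancel_left₀ _ (ne_of_gt hq0)]
    have hfe : Int.fract ((n : ℝ) / q) = (n % q : ℕ) / q := by
      rw [hsplit, Int.fract_natCast_add, Int.fract_eq_self.2 ⟨by positivity, by
        rw [div_lt_one hq0]; exact_mod_cast Nat.mod_lt n hqpos⟩]
    rw [hfe] at hq3
    have : (q : ℝ) < 2 * (n % q : ℕ) := by
      rw [div_lt_div_iff₀ (by norm_num) hq0] at hq3
      linarith
    exact_mod_cast this
  have hmod : q < 2 * (k % q) + 2 * (m % q) := by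
    have hadd : (k + m) % q = (k % q + m % q) % q := Nat.add_mod k m q
    have hr : k % q < q := Nat.mod_lt _ hqpos
    have hs : m % q < q := Nat.mod_lt _ hqpos
    rcases lt_or_ge (k % q + m % q) q with hlt | hge
    · rw [hnm, hadd, Nat.mod_eq_of_lt hlt] at hfr; omega
    · omega
  -- Legendre with one term
  have hval : ∀ x : ℕ, x ≤ 4 * n → padicValNat q x.factorial = x / q := by
    intro x hx
    rw [padicValNat_factorial (b := 2) ?_]
    · simp
    · rcases Nat.eq_zero_or_pos x with h0 | h0
      · simp [h0]
      · exact Nat.log_lt_of_lt_pow (by omega) (by omega)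
  -- rewrite expression as cast of single nats
  have h4 : 4 * n - 4 * k = 4 * m := by omega
  have h2 : 2 * n - 2 * k = 2 * m := by omega
  set N : ℕ := (4 * k).factorial * (4 * m).factorial with hN
  set D : ℕ := (2 * k).factorial * ((2 * m).factorial *
    (k.factorial * (k.factorial * (m.factorial * m.factorial)))) with hD
  have hexpr : (((4 * k).factorial * (4 * n - 4 * k).factorial : ℚ) /
        ((2 * k).factorial * (2 * n - 2 * k).factorial *
          (k.factorial : ℚ) ^ 2 * ((n - k).factorial : ℚ) ^ 2))
      = (N : ℚ) / (D : ℚ) := by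
    rw [h4, h2, hN, hD, ← hm]
    push_cast
    ring
  rw [hexpr]
  have hNne : (N : ℚ) ≠ 0 := by
    simp [hN, Nat.factorial_ne_zero]
  have hDne : (D : ℚ) ≠ 0 := by
    simp [hD, Nat.factorial_ne_zero]
  rw [padicValRat.div hNne hDne, padicValRat.of_nat, padicValRat.of_nat]
  have hNval : padicValNat q N = 4 * k / q + 4 * m / q := by
    rw [hN, padicValNat.mul (Nat.factorial_ne_zero _) (Nat.factorial_ne_zero _),
      hval _ (by omega), hval _ (by omega)]
  have hDval : padicValNat q D =
      2 * k / q + (2 * m / q + (k / q + (k / q + (m / q + m / q)))) := by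
    rw [hD, padicValNat.mul (Nat.factorial_ne_zero _) (by positivity),
      padicValNat.mul (Nat.factorial_ne_zero _) (by positivity),
      padicValNat.mul (Nat.factorial_ne_zero _) (by positivity),
      padicValNat.mul (Nat.factorial_ne_zero _) (by positivity),
      padicValNat.mul (Nat.factorial_ne_zero _) (Nat.factorial_ne_zero _),
      hval _ (by omega), hval _ (by omega), hval _ (by omega),
      hval _ (by omega)]
  rw [hNval, hDval]
  have hkey := key_lemma q k m hqpos hmod
  have hkey' : (2 * k / q + (2 * m / q + (k / q + (k / q + (m / q + m / q)))) : ℤ) + 1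
      ≤ ((4 * k / q + 4 * m / q : ℕ) : ℤ) := by exact_mod_cast (by omega : 
        2 * k / q + (2 * m / q + (k / q + (k / q + (m / q + m / q)))) + 1
          ≤ 4 * k / q + 4 * m / q)
  push_cast at hkey' ⊢
  linarith
end

section
/- For all real numbers x and y with 1/2 < x < 1 and 0 ≤ y < 1, one has ⌊4y⌋ + ⌊4x − 4y⌋ − ⌊2y⌋ − ⌊2x − 2y⌋ − 2⌊y⌋ − 2⌊x − y⌋ ≥ 1. -/
lemma floor_double (t : ℝ) : 2 * ⌊t⌋ ≤ ⌊2 * t⌋ := by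
  apply Int.le_floor.2
  push_cast
  linarith [Int.floor_le t]

/-- For real `x, y` with `1/2 < x < 1` and `0 ≤ y < 1`,
`⌊4y⌋ + ⌊4x-4y⌋ - ⌊2y⌋ - ⌊2x-2y⌋ - 2⌊y⌋ - 2⌊x-y⌋ ≥ 1`. -/
theorem floor_inequality (x y : ℝ) (hx1 : 1/2 < x) (hx2 : x < 1)
    (hy1 : 0 ≤ y) (hy2 : y < 1) :
    1 ≤ ⌊4 * y⌋ + ⌊4 * x - 4 * y⌋ - ⌊2 * y⌋ - ⌊2 * x - 2 * y⌋ - 2 * ⌊y⌋ - 2 * ⌊x - y⌋ := by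
  have hy0 : ⌊y⌋ = 0 := Int.floor_eq_zero_iff.2 ⟨hy1, hy2⟩
  have h2 : ⌊4 * x - 4 * y⌋ ≥ 2 * ⌊2 * x - 2 * y⌋ := by
    have := floor_double (2 * x - 2 * y)
    rw [show 2 * (2 * x - 2 * y) = 4 * x - 4 * y by ring] at this
    exact this
  have h3 : ⌊2 * x - 2 * y⌋ ≥ 2 * ⌊x - y⌋ := by
    have := floor_double (x - y)
    rw [show 2 * (x - y) = 2 * x - 2 * y by ring] at this
    exact this
  rcases lt_or_ge y (1/4) with hc | hc
  · -- y < 1/4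
    have h4y : ⌊4 * y⌋ = 0 := Int.floor_eq_zero_iff.2 ⟨by linarith, by linarith⟩
    have h2y : ⌊2 * y⌋ = 0 := Int.floor_eq_zero_iff.2 ⟨by linarith, by linarith⟩
    have hxy : ⌊x - y⌋ = 0 := Int.floor_eq_zero_iff.2 ⟨by linarith, by linarith⟩
    rcases lt_or_ge (2 * x - 2 * y) 1 with hd | hd
    · have ha : ⌊2 * x - 2 * y⌋ = 0 :=
        Int.floor_eq_zero_iff.2 ⟨by linarith, by linarith⟩
      have hb : (1 : ℤ) ≤ ⌊4 * x - 4 * y⌋ := Int.le_floor.2 (by push_cast; linarith)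
      omega
    · have ha : (1 : ℤ) ≤ ⌊2 * x - 2 * y⌋ := Int.le_floor.2 (by push_cast; linarith)
      omega
  · -- y ≥ 1/4
    have hkey : ⌊2 * y⌋ + 1 ≤ ⌊4 * y⌋ := by
      rcases lt_or_ge y (1/2) with hd | hd
      · have h2y : ⌊2 * y⌋ = 0 := Int.floor_eq_zero_iff.2 ⟨by linarith, by linarith⟩
        have : (1 : ℤ) ≤ ⌊4 * y⌋ := Int.le_floor.2 (by push_cast; linarith)
        omega
      · have h2y : (1 : ℤ) ≤ ⌊2 * y⌋ := Int.le_floor.2 (by push_cast; linarith)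
        have := floor_double (2 * y)
        rw [show 2 * (2 * y) = 4 * y by ring] at this
        omega
    omega
end

section
/- Fix a nonnegative integer s and δ ∈ {0,1}. For every ε > 0 there exists N such that for all n ≥ N: max_{0 ≤ i ≤ 2s+4} |ρ_{n,i}| ≤ 2^{(6s+12+ε)n} and max_{0 ≤ i ≤ s+2} |σ_{n,i}| ≤ 2^{(3s+6+ε)n}, where |·| denotes the ordinary (Archimedean) absolute value on ℚ. -/
open Filter Finset

/-- Pochhammer symbol `(α)_k = α (α+1) ⋯ (α+k-1)` for rational `α`. -/
def poch (α : ℚ) (k : ℕ) : ℚ := ∏ i ∈ Finset.range k, (α + i)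

/-- The rational function
`A_n(t) = 2^{(6s+12)n} (4t+2n)^δ (t+1/4)_n^{s+2} (t+3/4)_n^{s+2} / (t)_{n+1}^{2s+4}`. -/
def Afun (s δ n : ℕ) (t : ℚ) : ℚ :=
  2 ^ ((6 * s + 12) * n) * (4 * t + 2 * n) ^ δ *
    poch (t + 1/4) n ^ (s + 2) * poch (t + 3/4) n ^ (s + 2) / poch t (n + 1) ^ (2 * s + 4)

/-- The rational function `B_n(t) = 2^{(3s+6)n} (t+3/4)_n^{s+2} / (t)_{n+1}^{s+2}`. -/
def Bfun (s n : ℕ) (t : ℚ) : ℚ :=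
  2 ^ ((3 * s + 6) * n) * poch (t + 3/4) n ^ (s + 2) / poch t (n + 1) ^ (s + 2)

/-- `dlcm n = lcm(1, 2, …, n)`. -/
def dlcm (n : ℕ) : ℕ := (Finset.Icc 1 n).lcm id

open scoped Classical in
/-- `Phi n` is the product of all primes `q` with `√(10 n) < q ≤ n` and `{n/q} > 1/2`. -/
noncomputable def Phi (n : ℕ) : ℕ :=
  ∏ q ∈ Finset.Icc 1 n,
    if q.Prime ∧ Real.sqrt (10 * n) < (q : ℝ) ∧ 1/2 < Int.fract ((n : ℝ) / q) then q else 1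

/-- The coefficient `ρ_{n,i}` of the linear form `S_n` (with `ρ_{n,0}` the constant term),
expressed in terms of the partial-fraction coefficients `a` of `A_n`. -/
def rhoCoef (s n : ℕ) (a : ℕ → ℕ → ℚ) (i : ℕ) : ℚ :=
  if i = 0 then
    (-1 : ℚ) ^ (s + 1) * ∑ i' ∈ Finset.Icc 1 (2 * s + 4), ∑ k ∈ Finset.Icc 1 n,
      ∑ ℓ ∈ Finset.range k, poch (i' : ℚ) (s + 1) * a i' k / ((ℓ : ℚ) + 1/4) ^ (i' + s + 1)
  else
    (-1 : ℚ) ^ s * poch (i : ℚ) (s + 1) * 4 ^ (i + s) * ∑ k ∈ Finset.range (n + 1), a i k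

/-- The coefficient `σ_{n,i}` of the linear form `T_n` (with `σ_{n,0}` the constant term),
expressed in terms of the partial-fraction coefficients `b` of `B_n`. -/
def sigmaCoef (s n : ℕ) (b : ℕ → ℕ → ℚ) (i : ℕ) : ℚ :=
  if i = 0 then
    (-1 : ℚ) ^ (s + 1) * ∑ i' ∈ Finset.Icc 1 (s + 2), ∑ k ∈ Finset.Icc 1 n,
      ∑ ℓ ∈ Finset.range k, poch (i' : ℚ) (s + 1) * b i' k / ((ℓ : ℚ) + 1/4) ^ (i' + s + 1)
  else
    (-1 : ℚ) ^ s * poch (i : ℚ) (s + 1) * 4 ^ (i + s) * ∑ k ∈ Finset.range (n + 1), b i k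

set_option maxHeartbeats 1000000

noncomputable def auxf (m : ℕ) : ℝ := ((m:ℝ) + 2) / ((m:ℝ) + 1)

lemma auxf_one_le (m : ℕ) : 1 ≤ auxf m := by
  rw [auxf, le_div_iff₀ (by positivity)]
  linarith

lemma aux_prod_ratio (N : ℕ) : ∏ m ∈ Finset.range N, auxf m = (N:ℝ) + 1 := by
  induction N with
  | zero => simp
  | succ N ih =>
    rw [Finset.prod_range_succ, ih, auxf]
    have h : ((N:ℝ) + 1) ≠ 0 := by positivity
    field_simp
    push_cast; ring

lemma aux_prod_subset_le {s t : Finset ℕ} (hst : s ⊆ t) (g : ℕ → ℝ) (hg : ∀ m, 1 ≤ g m) :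
    ∏ m ∈ s, g m ≤ ∏ m ∈ t, g m := by
  rw [← Finset.prod_sdiff hst]
  have h1 : (1:ℝ) ≤ ∏ m ∈ t \ s, g m := by
    have := Finset.prod_le_prod (s := t \ s) (f := fun _ => (1:ℝ)) (g := g)
      (fun i _ => zero_le_one) (fun i _ => hg i)
    simpa using this
  have h2 : (0:ℝ) ≤ ∏ m ∈ s, g m :=
    Finset.prod_nonneg fun i _ => le_trans zero_le_one (hg i)
  nlinarith

lemma aux_prod_f_le (n k0 : ℕ) (hk0 : k0 ≤ n) (u : ℕ → ℕ) (hu : ∀ j, j < n → u j ≤ n)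
    (huinj : ∀ j1, j1 < n → ∀ j2, j2 < n → u j1 = u j2 → j1 = j2) :
    ∏ j ∈ Finset.range n, auxf ((u j : ℤ) - (k0:ℤ)).natAbs ≤ ((n:ℝ) + 2) ^ 2 := by
  classical
  have hR : ∀ (S : Finset ℕ) (v : ℕ → ℕ), S ⊆ Finset.range n →
      (∀ j ∈ S, v j ≤ n) → (∀ j1 ∈ S, ∀ j2 ∈ S, v j1 = v j2 → j1 = j2) →
      ∏ j ∈ S, auxf (v j) ≤ (n:ℝ) + 2 := by
    intro S v hS hvle hvinj
    have himg : S.image v ⊆ Finset.range (n+1) := by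
      intro m hm
      rcases Finset.mem_image.mp hm with ⟨j, hj, rfl⟩
      exact Finset.mem_range.mpr (Nat.lt_succ_of_le (hvle j hj))
    have : ∏ j ∈ S, auxf (v j) = ∏ m ∈ S.image v, auxf m :=
      (Finset.prod_image (fun j1 h1 j2 h2 h => hvinj j1 h1 j2 h2 h)).symm
    rw [this]
    calc ∏ m ∈ S.image v, auxf m ≤ ∏ m ∈ Finset.range (n+1), auxf m :=
          aux_prod_subset_le himg auxf auxf_one_le
      _ = (n:ℝ) + 2 := by rw [aux_prod_ratio]; push_cast; ring
  have hsplit := Finset.prod_filter_mul_prod_filter_not (Finset.range n)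
    (fun j => k0 ≤ u j) (fun j => auxf ((u j : ℤ) - (k0:ℤ)).natAbs)
  rw [← hsplit]
  have h1 : ∏ j ∈ (Finset.range n).filter (fun j => k0 ≤ u j),
      auxf ((u j : ℤ) - (k0:ℤ)).natAbs ≤ (n:ℝ) + 2 := by
    have := hR ((Finset.range n).filter (fun j => k0 ≤ u j)) (fun j => u j - k0)
      (Finset.filter_subset _ _)
      (fun j hj => le_trans (Nat.sub_le _ _) (hu j (Finset.mem_range.mp (Finset.mem_filter.mp hj).1)))
      (fun j1 h1 j2 h2 h => by
        have e1 := (Finset.mem_filter.mp h1).2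
        have e2 := (Finset.mem_filter.mp h2).2
        exact huinj j1 (Finset.mem_range.mp (Finset.mem_filter.mp h1).1)
          j2 (Finset.mem_range.mp (Finset.mem_filter.mp h2).1) (by
            have h' : u j1 - k0 = u j2 - k0 := h
            omega))
    refine le_trans (le_of_eq (Finset.prod_congr rfl fun j hj => ?_)) this
    have e := (Finset.mem_filter.mp hj).2
    show auxf ((u j : ℤ) - (k0:ℤ)).natAbs = auxf (u j - k0)
    congr 1
    omega
  have h2 : ∏ j ∈ (Finset.range n).filter (fun j => ¬ k0 ≤ u j),
      auxf ((u j : ℤ) - (k0:ℤ)).natAbs ≤ (n:ℝ) + 2 := by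
    have := hR ((Finset.range n).filter (fun j => ¬ k0 ≤ u j)) (fun j => k0 - u j)
      (Finset.filter_subset _ _)
      (fun j hj => le_trans (Nat.sub_le _ _) hk0)
      (fun j1 h1 j2 h2 h => by
        have e1 := (Finset.mem_filter.mp h1).2
        have e2 := (Finset.mem_filter.mp h2).2
        exact huinj j1 (Finset.mem_range.mp (Finset.mem_filter.mp h1).1)
          j2 (Finset.mem_range.mp (Finset.mem_filter.mp h2).1) (by
            have h' : k0 - u j1 = k0 - u j2 := h
            omega))
    refine le_trans (le_of_eq (Finset.prod_congr rfl fun j hj => ?_)) this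
    have e := (Finset.mem_filter.mp hj).2
    show auxf ((u j : ℤ) - (k0:ℤ)).natAbs = auxf (k0 - u j)
    congr 1
    omega
  have hp1 : (0:ℝ) ≤ ∏ j ∈ (Finset.range n).filter (fun j => k0 ≤ u j),
      auxf ((u j : ℤ) - (k0:ℤ)).natAbs :=
    Finset.prod_nonneg fun i _ => le_trans zero_le_one (auxf_one_le _)
  nlinarith [auxf_one_le 0]

lemma aux_pf_clear {K : Type*} [Field K] (p n : ℕ) (c : ℕ → ℕ → K) (t : K)
    (ht : ∀ k ∈ Finset.range (n+1), t + (k : K) ≠ 0) :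
    (∑ i ∈ Finset.Icc 1 p, ∑ k ∈ Finset.range (n+1), c i k / (t + (k : K)) ^ i) *
      (∏ k ∈ Finset.range (n+1), (t + (k : K))) ^ p
    = ∑ i ∈ Finset.Icc 1 p, ∑ k ∈ Finset.range (n+1),
        c i k * (t + (k : K)) ^ (p - i) *
          ∏ k' ∈ (Finset.range (n+1)).erase k, (t + (k' : K)) ^ p := by
  rw [Finset.sum_mul]
  refine Finset.sum_congr rfl fun i hi => ?_
  rw [Finset.sum_mul]
  refine Finset.sum_congr rfl fun k hk => ?_
  have hik : i ≤ p := (Finset.mem_Icc.mp hi).2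
  have h0 : t + (k : K) ≠ 0 := ht k hk
  have hD : (∏ k' ∈ Finset.range (n+1), (t + (k' : K))) ^ p
      = (t + (k : K)) ^ p * ∏ k' ∈ (Finset.range (n+1)).erase k, (t + (k' : K)) ^ p := by
    rw [← Finset.mul_prod_erase _ _ hk, mul_pow, Finset.prod_pow]
  rw [hD, ← pow_sub_mul_pow (t + (k : K)) hik]
  field_simp

lemma aux_poly_eq (p n : ℕ) (c : ℕ → ℕ → ℚ) (num : Polynomial ℚ)
    (hrep : ∀ t : ℚ, 0 < t →
      Polynomial.eval t num =
        (∑ i ∈ Finset.Icc 1 p, ∑ k ∈ Finset.range (n+1), c i k / (t + (k:ℚ)) ^ i) *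
          (∏ k ∈ Finset.range (n+1), (t + (k:ℚ))) ^ p) :
    num = ∑ i ∈ Finset.Icc 1 p, ∑ k ∈ Finset.range (n+1),
        Polynomial.C (c i k) * (Polynomial.X + Polynomial.C (k:ℚ)) ^ (p - i) *
          ∏ k' ∈ (Finset.range (n+1)).erase k, (Polynomial.X + Polynomial.C (k':ℚ)) ^ p := by
  set R : Polynomial ℚ := ∑ i ∈ Finset.Icc 1 p, ∑ k ∈ Finset.range (n+1),
        Polynomial.C (c i k) * (Polynomial.X + Polynomial.C (k:ℚ)) ^ (p - i) *
          ∏ k' ∈ (Finset.range (n+1)).erase k, (Polynomial.X + Polynomial.C (k':ℚ)) ^ p with hR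
  have key : ∀ t : ℚ, 0 < t → Polynomial.IsRoot (num - R) t := by
    intro t ht
    have ht' : ∀ k ∈ Finset.range (n+1), t + (k:ℚ) ≠ 0 := by
      intro k _
      positivity
    have hRe : Polynomial.eval t R = ∑ i ∈ Finset.Icc 1 p, ∑ k ∈ Finset.range (n+1),
        c i k * (t + (k:ℚ)) ^ (p - i) *
          ∏ k' ∈ (Finset.range (n+1)).erase k, (t + (k':ℚ)) ^ p := by
      simp [hR, Polynomial.eval_finset_sum, Polynomial.eval_prod]
    unfold Polynomial.IsRoot
    rw [Polynomial.eval_sub, hRe, hrep t ht, aux_pf_clear p n c t ht', sub_self]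
  have h0 : num - R = 0 := Polynomial.eq_zero_of_infinite_isRoot _
    ((Set.Ioi_infinite (0:ℚ)).mono fun t ht => key t ht)
  exact sub_eq_zero.mp h0

lemma aux_sphere_norm {k0 : ℕ} {z : ℂ} (hz : z ∈ Metric.sphere (-(k0:ℂ)) (1/2)) :
    ‖z + (k0:ℂ)‖ = 1/2 := by
  have := Metric.mem_sphere.mp hz
  rw [Complex.dist_eq, sub_neg_eq_add] at this
  exact this

lemma aux_norm_int (j k0 : ℕ) : ‖(j:ℂ) - (k0:ℂ)‖ = (((j:ℤ) - (k0:ℤ)).natAbs : ℝ) := by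
  have h1 : (j:ℂ) - (k0:ℂ) = ((((j:ℝ) - (k0:ℝ)) : ℝ) : ℂ) := by push_cast; ring
  rw [h1, Complex.norm_real, Real.norm_eq_abs, Nat.cast_natAbs]
  push_cast
  ring

lemma aux_norm_lower {k0 : ℕ} {z : ℂ} (hz : z ∈ Metric.sphere (-(k0:ℂ)) (1/2)) (j : ℕ) :
    ((((j:ℤ) - (k0:ℤ)).natAbs : ℝ) + 1) / 4 ≤ ‖z + (j:ℂ)‖ ∧ (1/2 : ℝ) ≤ ‖z + (j:ℂ)‖ := by
  have h0 := aux_sphere_norm hz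
  have htri : ‖(j:ℂ) - (k0:ℂ)‖ ≤ ‖z + (j:ℂ)‖ + ‖z + (k0:ℂ)‖ := by
    have e : (j:ℂ) - (k0:ℂ) = (z + (j:ℂ)) - (z + (k0:ℂ)) := by ring
    rw [e]
    exact norm_sub_le _ _
  rw [aux_norm_int] at htri
  rcases eq_or_ne j k0 with rfl | hne
  · simp only [sub_self, Int.natAbs_zero, Nat.cast_zero]
    constructor
    · rw [h0]; norm_num
    · rw [h0]
  · have hm : 1 ≤ ((j:ℤ) - (k0:ℤ)).natAbs := by omega
    have hm' : (1:ℝ) ≤ (((j:ℤ) - (k0:ℤ)).natAbs : ℝ) := by exact_mod_cast hm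
    constructor <;> [skip; skip] <;> rw [h0] at htri <;> linarith

lemma aux_norm_upper {k0 : ℕ} {z : ℂ} (hz : z ∈ Metric.sphere (-(k0:ℂ)) (1/2)) (j : ℕ)
    (c : ℂ) (hc : ‖c‖ ≤ 1/4) :
    ‖z + (j:ℂ) + c‖ ≤ ‖z + (j:ℂ)‖ * auxf ((j:ℤ) - (k0:ℤ)).natAbs := by
  obtain ⟨hlow, _⟩ := aux_norm_lower hz j
  set m : ℝ := (((j:ℤ) - (k0:ℤ)).natAbs : ℝ) with hm
  have hm0 : (0:ℝ) ≤ m := Nat.cast_nonneg _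
  have h1 : ‖z + (j:ℂ) + c‖ ≤ ‖z + (j:ℂ)‖ + 1/4 := le_trans (norm_add_le _ _) (by linarith)
  rw [auxf, ← hm, ← mul_div_assoc, le_div_iff₀ (by positivity : (0:ℝ) < m + 1)]
  nlinarith [norm_nonneg (z + (j:ℂ) + c)]

lemma aux_prodA {n k0 : ℕ} (hk0 : k0 ≤ n) {z : ℂ} (hz : z ∈ Metric.sphere (-(k0:ℂ)) (1/2)) :
    (∏ j ∈ Finset.range n, ‖z + (j:ℂ) + 1/4‖) * ∏ j ∈ Finset.range n, ‖z + ((j:ℕ)+1:ℕ) + (-(1/4):ℂ)‖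
      ≤ 4 * ((n:ℝ) + 2) ^ 4 * (∏ k ∈ Finset.range (n+1), ‖z + (k:ℂ)‖) ^ 2 := by
  have hP0pos : 0 < ∏ j ∈ Finset.range n, ‖z + (j:ℂ)‖ :=
    Finset.prod_pos fun k _ => lt_of_lt_of_le (by norm_num) (aux_norm_lower hz k).2
  have hP1pos : 0 < ∏ j ∈ Finset.range n, ‖z + ((j:ℕ)+1:ℕ)‖ :=
    Finset.prod_pos fun k _ => lt_of_lt_of_le (by norm_num) (aux_norm_lower hz _).2
  have hDP0 : ∏ k ∈ Finset.range (n+1), ‖z + (k:ℂ)‖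
      = (∏ j ∈ Finset.range n, ‖z + (j:ℂ)‖) * ‖z + ((n:ℕ):ℂ)‖ := Finset.prod_range_succ _ _
  have hDP1 : ∏ k ∈ Finset.range (n+1), ‖z + (k:ℂ)‖
      = ‖z‖ * ∏ j ∈ Finset.range n, ‖z + ((j:ℕ)+1:ℕ)‖ := by
    rw [Finset.prod_range_succ']
    simp only [Nat.cast_zero, add_zero]
    exact mul_comm _ _
  have hz0 : (1/2:ℝ) ≤ ‖z‖ := by
    have := (aux_norm_lower hz 0).2
    simpa using this
  have hzn : (1/2:ℝ) ≤ ‖z + ((n:ℕ):ℂ)‖ := (aux_norm_lower hz n).2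
  have hb1 : ∏ j ∈ Finset.range n, ‖z + (j:ℂ) + 1/4‖
      ≤ (∏ j ∈ Finset.range n, ‖z + (j:ℂ)‖) * ((n:ℝ)+2)^2 := by
    calc ∏ j ∈ Finset.range n, ‖z + (j:ℂ) + 1/4‖
        ≤ ∏ j ∈ Finset.range n, (‖z + (j:ℂ)‖ * auxf ((j:ℤ) - (k0:ℤ)).natAbs) :=
          Finset.prod_le_prod (fun j _ => norm_nonneg _)
            (fun j _ => aux_norm_upper hz j (1/4) (by norm_num))
      _ = (∏ j ∈ Finset.range n, ‖z + (j:ℂ)‖) * ∏ j ∈ Finset.range n, auxf ((j:ℤ) - (k0:ℤ)).natAbs :=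
          Finset.prod_mul_distrib
      _ ≤ (∏ j ∈ Finset.range n, ‖z + (j:ℂ)‖) * ((n:ℝ)+2)^2 :=
          mul_le_mul_of_nonneg_left
            (aux_prod_f_le n k0 hk0 (fun j => j) (fun j hj => hj.le) (fun _ _ _ _ h => h))
            hP0pos.le
  have hb2 : ∏ j ∈ Finset.range n, ‖z + ((j:ℕ)+1:ℕ) + (-(1/4):ℂ)‖
      ≤ (∏ j ∈ Finset.range n, ‖z + ((j:ℕ)+1:ℕ)‖) * ((n:ℝ)+2)^2 := by
    calc ∏ j ∈ Finset.range n, ‖z + ((j:ℕ)+1:ℕ) + (-(1/4):ℂ)‖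
        ≤ ∏ j ∈ Finset.range n, (‖z + ((j+1:ℕ):ℂ)‖ * auxf (((j+1:ℕ):ℤ) - (k0:ℤ)).natAbs) :=
          Finset.prod_le_prod (fun j _ => norm_nonneg _)
            (fun j _ => aux_norm_upper hz (j+1) (-(1/4)) (by norm_num))
      _ = (∏ j ∈ Finset.range n, ‖z + ((j:ℕ)+1:ℕ)‖) *
            ∏ j ∈ Finset.range n, auxf (((j+1:ℕ):ℤ) - (k0:ℤ)).natAbs :=
          Finset.prod_mul_distrib
      _ ≤ (∏ j ∈ Finset.range n, ‖z + ((j:ℕ)+1:ℕ)‖) * ((n:ℝ)+2)^2 := by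
          refine mul_le_mul_of_nonneg_left ?_ hP1pos.le
          have h := aux_prod_f_le n k0 hk0 (fun j => j+1)
            (fun j hj => by show j+1 ≤ n; omega)
            (fun j1 h1 j2 h2 hh => by
              have h' : j1 + 1 = j2 + 1 := hh
              omega)
          refine le_trans (le_of_eq (Finset.prod_congr rfl fun j hj => rfl)) h
  have hsq : (∏ k ∈ Finset.range (n+1), ‖z + (k:ℂ)‖)^2
      = ((∏ j ∈ Finset.range n, ‖z + (j:ℂ)‖) * ∏ j ∈ Finset.range n, ‖z + ((j:ℕ)+1:ℕ)‖)
        * (‖z‖ * ‖z + ((n:ℕ):ℂ)‖) := by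
    rw [pow_two]
    nth_rewrite 1 [hDP0]
    nth_rewrite 1 [hDP1]
    ring
  have hX : (1/4:ℝ) ≤ ‖z‖ * ‖z + ((n:ℕ):ℂ)‖ :=
    calc (1/4:ℝ) = (1/2) * (1/2) := by norm_num
      _ ≤ ‖z‖ * ‖z + ((n:ℕ):ℂ)‖ :=
          mul_le_mul hz0 hzn (by norm_num) (le_trans (by norm_num) hz0)
  have h7 : (∏ j ∈ Finset.range n, ‖z + (j:ℂ)‖) * (∏ j ∈ Finset.range n, ‖z + ((j:ℕ)+1:ℕ)‖)
      ≤ 4 * (∏ k ∈ Finset.range (n+1), ‖z + (k:ℂ)‖)^2 := by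
    rw [hsq]
    have h8 := mul_le_mul_of_nonneg_left hX (mul_pos hP0pos hP1pos).le
    calc (∏ j ∈ Finset.range n, ‖z + (j:ℂ)‖) * (∏ j ∈ Finset.range n, ‖z + ((j:ℕ)+1:ℕ)‖)
        = 4 * ((∏ j ∈ Finset.range n, ‖z + (j:ℂ)‖) * (∏ j ∈ Finset.range n, ‖z + ((j:ℕ)+1:ℕ)‖)
            * (1/4)) := by ring
      _ ≤ 4 * ((∏ j ∈ Finset.range n, ‖z + (j:ℂ)‖) * (∏ j ∈ Finset.range n, ‖z + ((j:ℕ)+1:ℕ)‖)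
            * (‖z‖ * ‖z + ((n:ℕ):ℂ)‖)) := by
          refine mul_le_mul_of_nonneg_left ?_ (by norm_num)
          exact h8
      _ = 4 * ((∏ j ∈ Finset.range n, ‖z + (j:ℂ)‖) * (∏ j ∈ Finset.range n, ‖z + ((j:ℕ)+1:ℕ)‖)
            * (‖z‖ * ‖z + ((n:ℕ):ℂ)‖)) := rfl
  calc (∏ j ∈ Finset.range n, ‖z + (j:ℂ) + 1/4‖) * ∏ j ∈ Finset.range n, ‖z + ((j:ℕ)+1:ℕ) + (-(1/4):ℂ)‖
      ≤ ((∏ j ∈ Finset.range n, ‖z + (j:ℂ)‖) * ((n:ℝ)+2)^2)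
          * ((∏ j ∈ Finset.range n, ‖z + ((j:ℕ)+1:ℕ)‖) * ((n:ℝ)+2)^2) :=
        mul_le_mul hb1 hb2 (Finset.prod_nonneg fun j _ => norm_nonneg _)
          (mul_nonneg hP0pos.le (by positivity))
    _ = ((∏ j ∈ Finset.range n, ‖z + (j:ℂ)‖) * (∏ j ∈ Finset.range n, ‖z + ((j:ℕ)+1:ℕ)‖))
          * (((n:ℝ)+2)^2 * ((n:ℝ)+2)^2) := by ring
    _ ≤ (4 * (∏ k ∈ Finset.range (n+1), ‖z + (k:ℂ)‖)^2) * (((n:ℝ)+2)^2 * ((n:ℝ)+2)^2) :=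
        mul_le_mul_of_nonneg_right h7 (by positivity)
    _ = 4 * ((n:ℝ) + 2) ^ 4 * (∏ k ∈ Finset.range (n+1), ‖z + (k:ℂ)‖) ^ 2 := by ring

lemma aux_prodB {n k0 : ℕ} (hk0 : k0 ≤ n) {z : ℂ} (hz : z ∈ Metric.sphere (-(k0:ℂ)) (1/2)) :
    (∏ j ∈ Finset.range n, ‖z + ((j:ℕ)+1:ℕ) + (-(1/4):ℂ)‖)
      ≤ 2 * ((n:ℝ) + 2) ^ 2 * ∏ k ∈ Finset.range (n+1), ‖z + (k:ℂ)‖ := by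
  have hP1pos : 0 < ∏ j ∈ Finset.range n, ‖z + ((j:ℕ)+1:ℕ)‖ :=
    Finset.prod_pos fun k _ => lt_of_lt_of_le (by norm_num) (aux_norm_lower hz _).2
  have hDP1 : ∏ k ∈ Finset.range (n+1), ‖z + (k:ℂ)‖
      = ‖z‖ * ∏ j ∈ Finset.range n, ‖z + ((j:ℕ)+1:ℕ)‖ := by
    rw [Finset.prod_range_succ']
    simp only [Nat.cast_zero, add_zero]
    exact mul_comm _ _
  have hz0 : (1/2:ℝ) ≤ ‖z‖ := by
    have := (aux_norm_lower hz 0).2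
    simpa using this
  have hb2 : ∏ j ∈ Finset.range n, ‖z + ((j:ℕ)+1:ℕ) + (-(1/4):ℂ)‖
      ≤ (∏ j ∈ Finset.range n, ‖z + ((j:ℕ)+1:ℕ)‖) * ((n:ℝ)+2)^2 := by
    calc ∏ j ∈ Finset.range n, ‖z + ((j:ℕ)+1:ℕ) + (-(1/4):ℂ)‖
        ≤ ∏ j ∈ Finset.range n, (‖z + ((j+1:ℕ):ℂ)‖ * auxf (((j+1:ℕ):ℤ) - (k0:ℤ)).natAbs) :=
          Finset.prod_le_prod (fun j _ => norm_nonneg _)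
            (fun j _ => aux_norm_upper hz (j+1) (-(1/4)) (by norm_num))
      _ = (∏ j ∈ Finset.range n, ‖z + ((j:ℕ)+1:ℕ)‖) *
            ∏ j ∈ Finset.range n, auxf (((j+1:ℕ):ℤ) - (k0:ℤ)).natAbs :=
          Finset.prod_mul_distrib
      _ ≤ (∏ j ∈ Finset.range n, ‖z + ((j:ℕ)+1:ℕ)‖) * ((n:ℝ)+2)^2 := by
          refine mul_le_mul_of_nonneg_left ?_ hP1pos.le
          have h := aux_prod_f_le n k0 hk0 (fun j => j+1)
            (fun j hj => by show j+1 ≤ n; omega)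
            (fun j1 h1 j2 h2 hh => by
              have h' : j1 + 1 = j2 + 1 := hh
              omega)
          exact h
  have hP1D : (∏ j ∈ Finset.range n, ‖z + ((j:ℕ)+1:ℕ)‖)
      ≤ 2 * ∏ k ∈ Finset.range (n+1), ‖z + (k:ℂ)‖ := by
    rw [hDP1]
    have h1 : (1:ℝ) ≤ 2 * ‖z‖ := by linarith
    calc (∏ j ∈ Finset.range n, ‖z + ((j:ℕ)+1:ℕ)‖)
        = 1 * ∏ j ∈ Finset.range n, ‖z + ((j:ℕ)+1:ℕ)‖ := (one_mul _).symm
      _ ≤ (2 * ‖z‖) * ∏ j ∈ Finset.range n, ‖z + ((j:ℕ)+1:ℕ)‖ :=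
          mul_le_mul_of_nonneg_right h1 hP1pos.le
      _ = 2 * (‖z‖ * ∏ j ∈ Finset.range n, ‖z + ((j:ℕ)+1:ℕ)‖) := by ring
  calc ∏ j ∈ Finset.range n, ‖z + ((j:ℕ)+1:ℕ) + (-(1/4):ℂ)‖
      ≤ (∏ j ∈ Finset.range n, ‖z + ((j:ℕ)+1:ℕ)‖) * ((n:ℝ)+2)^2 := hb2
    _ ≤ (2 * ∏ k ∈ Finset.range (n+1), ‖z + (k:ℂ)‖) * ((n:ℝ)+2)^2 :=
        mul_le_mul_of_nonneg_right hP1D (by positivity)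
    _ = 2 * ((n:ℝ) + 2) ^ 2 * ∏ k ∈ Finset.range (n+1), ‖z + (k:ℂ)‖ := by ring

lemma aux_circleIntegral_sum {ι : Type*} (s : Finset ι) (f : ι → ℂ → ℂ) (c : ℂ) (R : ℝ)
    (h : ∀ i ∈ s, CircleIntegrable (f i) c R) :
    (∮ z in C(c, R), ∑ i ∈ s, f i z) = ∑ i ∈ s, ∮ z in C(c, R), f i z := by
  simp only [circleIntegral, Finset.smul_sum]
  exact intervalIntegral.integral_finset_sum fun i hi => (h i hi).out

lemma aux_sphere_ne {k0 : ℕ} {z : ℂ} (hz : z ∈ Metric.sphere (-(k0:ℂ)) (1/2)) :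
    z + (k0:ℂ) ≠ 0 := by
  intro h
  have := aux_sphere_norm hz
  rw [h] at this
  norm_num at this

lemma aux_closedBall_ne {k k0 : ℕ} (hkk0 : k ≠ k0) {z : ℂ}
    (hz : z ∈ Metric.closedBall (-(k0:ℂ)) (1/2)) : z + (k:ℂ) ≠ 0 := by
  intro h
  have hzz : z = -(k:ℂ) := by linear_combination h
  rw [Metric.mem_closedBall, hzz, Complex.dist_eq] at hz
  have e1 : -(k:ℂ) - -(k0:ℂ) = (k0:ℂ) - (k:ℂ) := by ring
  rw [e1, aux_norm_int k0 k] at hz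
  have h1 : 1 ≤ ((k0:ℤ) - (k:ℤ)).natAbs := by omega
  have h1' : (1:ℝ) ≤ (((k0:ℤ) - (k:ℤ)).natAbs : ℝ) := by exact_mod_cast h1
  linarith

lemma aux_key_integral (k0 k e i : ℕ) (hi : 1 ≤ i) (hkk0 : k ≠ k0 → True) :
    (∮ z in C(-(k0:ℂ), 1/2), (z + (k:ℂ)) ^ (-(i:ℤ)) * (z + (k0:ℂ)) ^ e)
      = if k = k0 ∧ i = e + 1 then 2 * Real.pi * Complex.I else 0 := by
  rcases eq_or_ne k k0 with rfl | hne
  · have heq : Set.EqOn (fun z => (z + (k:ℂ)) ^ (-(i:ℤ)) * (z + (k:ℂ)) ^ e)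
        (fun z => (z - (-(k:ℂ))) ^ ((e:ℤ) - (i:ℤ))) (Metric.sphere (-(k:ℂ)) (1/2)) := by
      intro z hz
      have h0 : z + (k:ℂ) ≠ 0 := aux_sphere_ne hz
      show (z + (k:ℂ)) ^ (-(i:ℤ)) * (z + (k:ℂ)) ^ e = (z - (-(k:ℂ))) ^ ((e:ℤ) - (i:ℤ))
      rw [sub_neg_eq_add, ← zpow_natCast (z + (k:ℂ)) e, ← zpow_add₀ h0]
      congr 1
      ring
    rw [circleIntegral.integral_congr (by norm_num) heq]
    by_cases hie : i = e + 1
    · have hexp : (e:ℤ) - (i:ℤ) = -1 := by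
        subst hie; push_cast; ring
      rw [hexp]
      simp only [zpow_neg_one]
      rw [circleIntegral.integral_sub_center_inv (-(k:ℂ)) (by norm_num : (1/2:ℝ) ≠ 0)]
      simp [hie]
    · rw [circleIntegral.integral_sub_zpow_of_ne (by
        intro hcon
        apply hie
        omega)]
      simp [hie]
  · have hd : ∀ z ∈ Metric.closedBall (-(k0:ℂ)) (1/2),
        DifferentiableAt ℂ (fun z => (z + (k:ℂ)) ^ (-(i:ℤ)) * (z + (k0:ℂ)) ^ e) z := by
      intro z hz
      have h0 : z + (k:ℂ) ≠ 0 := aux_closedBall_ne hne hz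
      exact (((differentiableAt_id.add_const ((k:ℂ))).zpow (Or.inl h0)).mul
        ((differentiableAt_id.add_const ((k0:ℂ))).pow e))
    rw [Complex.circleIntegral_eq_zero_of_differentiable_on_off_countable (by norm_num)
      Set.countable_empty
      (fun z hz => (hd z hz).continuousAt.continuousWithinAt)
      (fun z hz => hd z (Metric.ball_subset_closedBall hz.1))]
    simp [hne]

lemma aux_sphere_nonzero {k0 : ℕ} {z : ℂ} (hz : z ∈ Metric.sphere (-(k0:ℂ)) (1/2)) (j : ℕ) :
    z + (j:ℂ) ≠ 0 := by
  intro h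
  have := (aux_norm_lower hz j).2
  rw [h] at this
  norm_num at this

lemma aux_coeff_bound (p n : ℕ) (c : ℕ → ℕ → ℚ) (num : Polynomial ℚ) (M : ℝ)
    (hrep : ∀ t : ℚ, (∀ k : ℕ, k ≤ n → t + (k:ℚ) ≠ 0) →
      Polynomial.eval t num =
        (∑ i ∈ Finset.Icc 1 p, ∑ k ∈ Finset.range (n+1), c i k / (t + (k:ℚ)) ^ i) *
          (∏ k ∈ Finset.range (n+1), (t + (k:ℚ))) ^ p)
    (hM : ∀ k0 : ℕ, k0 ≤ n → ∀ z ∈ Metric.sphere (-(k0:ℂ)) (1/2:ℝ),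
      ‖(Polynomial.aeval z num : ℂ)‖ ≤ M * (∏ k ∈ Finset.range (n+1), ‖z + (k:ℂ)‖) ^ p) :
    ∀ i0 k0 : ℕ, 1 ≤ i0 → i0 ≤ p → k0 ≤ n → |((c i0 k0 : ℚ) : ℝ)| ≤ M := by
  have hpoly := aux_poly_eq p n c num (fun t ht => hrep t (fun k hk => by positivity))
  intro i0 k0 hi0 hi0p hk0
  -- the partial fraction sum as a function on ℂ
  set g : ℂ → ℂ := fun z => ∑ i ∈ Finset.Icc 1 p, ∑ k ∈ Finset.range (n+1),
    (c i k : ℂ) * (z + (k:ℂ)) ^ (-(i:ℤ)) with hg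
  -- the complex identity on the sphere
  have hgid : ∀ z ∈ Metric.sphere (-(k0:ℂ)) (1/2:ℝ),
      (Polynomial.aeval z num : ℂ) = g z * (∏ k ∈ Finset.range (n+1), (z + (k:ℂ))) ^ p := by
    intro z hz
    have hznz : ∀ k ∈ Finset.range (n+1), z + (k:ℂ) ≠ 0 := fun k _ => aux_sphere_nonzero hz k
    have h1 : (Polynomial.aeval z num : ℂ)
        = ∑ i ∈ Finset.Icc 1 p, ∑ k ∈ Finset.range (n+1),
            (c i k : ℂ) * (z + (k:ℂ)) ^ (p - i) *
              ∏ k' ∈ (Finset.range (n+1)).erase k, (z + (k':ℂ)) ^ p := by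
      rw [hpoly]
      simp only [map_sum, map_mul, map_pow, map_prod, map_add, Polynomial.aeval_X,
        Polynomial.aeval_C, eq_ratCast]
      norm_cast
    rw [h1, ← aux_pf_clear p n (fun i k => (c i k : ℂ)) z hznz]
    congr 1
    rw [hg]
    refine Finset.sum_congr rfl fun i _ => Finset.sum_congr rfl fun k hk => ?_
    rw [zpow_neg, zpow_natCast, div_eq_mul_inv]
  -- norm bound for g on the sphere
  have hDpos : ∀ z ∈ Metric.sphere (-(k0:ℂ)) (1/2:ℝ),
      (0:ℝ) < ∏ k ∈ Finset.range (n+1), ‖z + (k:ℂ)‖ := fun z hz =>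
    Finset.prod_pos fun k _ => lt_of_lt_of_le (by norm_num) (aux_norm_lower hz k).2
  have hgM : ∀ z ∈ Metric.sphere (-(k0:ℂ)) (1/2:ℝ), ‖g z‖ ≤ M := by
    intro z hz
    have hDz : (∏ k ∈ Finset.range (n+1), (z + (k:ℂ))) ≠ 0 :=
      Finset.prod_ne_zero_iff.mpr fun k _ => aux_sphere_nonzero hz k
    have hDn : ‖(∏ k ∈ Finset.range (n+1), (z + (k:ℂ)))^p‖
        = (∏ k ∈ Finset.range (n+1), ‖z + (k:ℂ)‖) ^ p := by
      rw [norm_pow]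
      congr 1
      exact norm_prod _ _
    have hgz : g z = (Polynomial.aeval z num : ℂ) / (∏ k ∈ Finset.range (n+1), (z + (k:ℂ)))^p := by
      rw [eq_div_iff (pow_ne_zero _ hDz)]
      exact (hgid z hz).symm
    rw [hgz, norm_div, hDn, div_le_iff₀ (pow_pos (hDpos z hz) p)]
    exact hM k0 hk0 z hz
  -- M is nonnegative
  have hM0 : 0 ≤ M := by
    have hmem : circleMap (-(k0:ℂ)) (1/2) 0 ∈ Metric.sphere (-(k0:ℂ)) (1/2:ℝ) :=
      circleMap_mem_sphere _ (by norm_num) _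
    exact le_trans (norm_nonneg _) (hgM _ hmem)
  -- integrability of the terms
  have hcont : ∀ (q : ℕ → ℕ → ℂ) (e : ℕ),
      CircleIntegrable (fun z => ∑ i ∈ Finset.Icc 1 p, ∑ k ∈ Finset.range (n+1),
        q i k * ((z + (k:ℂ)) ^ (-(i:ℤ)) * (z + (k0:ℂ)) ^ e)) (-(k0:ℂ)) (1/2) := by
    intro q e
    refine ContinuousOn.circleIntegrable (by norm_num) ?_
    refine continuousOn_finset_sum _ fun i _ => continuousOn_finset_sum _ fun k _ => ?_
    refine ContinuousOn.mul continuousOn_const (ContinuousOn.mul ?_ ?_)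
    · exact ContinuousOn.zpow₀ ((continuous_id.add continuous_const).continuousOn) _
        (fun z hz => Or.inl (aux_sphere_nonzero hz k))
    · exact ((continuous_id.add continuous_const).pow _).continuousOn
  have hconti : ∀ (q : ℕ → ℕ → ℂ) (e i : ℕ),
      CircleIntegrable (fun z => ∑ k ∈ Finset.range (n+1),
        q i k * ((z + (k:ℂ)) ^ (-(i:ℤ)) * (z + (k0:ℂ)) ^ e)) (-(k0:ℂ)) (1/2) := by
    intro q e i
    refine ContinuousOn.circleIntegrable (by norm_num) ?_
    refine continuousOn_finset_sum _ fun k _ => ?_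
    refine ContinuousOn.mul continuousOn_const (ContinuousOn.mul ?_ ?_)
    · exact ContinuousOn.zpow₀ ((continuous_id.add continuous_const).continuousOn) _
        (fun z hz => Or.inl (aux_sphere_nonzero hz k))
    · exact ((continuous_id.add continuous_const).pow _).continuousOn
  have hcontik : ∀ (e i k : ℕ),
      CircleIntegrable (fun z => (c i k : ℂ) * ((z + (k:ℂ)) ^ (-(i:ℤ)) * (z + (k0:ℂ)) ^ e))
        (-(k0:ℂ)) (1/2) := by
    intro e i k
    refine ContinuousOn.circleIntegrable (by norm_num) ?_
    refine ContinuousOn.mul continuousOn_const (ContinuousOn.mul ?_ ?_)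
    · exact ContinuousOn.zpow₀ ((continuous_id.add continuous_const).continuousOn) _
        (fun z hz => Or.inl (aux_sphere_nonzero hz k))
    · exact ((continuous_id.add continuous_const).pow _).continuousOn
  -- compute the contour integral
  have hInt : (∮ z in C(-(k0:ℂ), 1/2), g z * (z + (k0:ℂ)) ^ (i0 - 1))
      = 2 * Real.pi * Complex.I * (c i0 k0 : ℂ) := by
    have heq : (fun z : ℂ => g z * (z + (k0:ℂ)) ^ (i0 - 1))
        = fun z => ∑ i ∈ Finset.Icc 1 p, ∑ k ∈ Finset.range (n+1),
            (c i k : ℂ) * ((z + (k:ℂ)) ^ (-(i:ℤ)) * (z + (k0:ℂ)) ^ (i0 - 1)) := by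
      funext z
      rw [hg]
      rw [Finset.sum_mul]
      refine Finset.sum_congr rfl fun i _ => ?_
      rw [Finset.sum_mul]
      refine Finset.sum_congr rfl fun k _ => ?_
      ring
    rw [heq]
    rw [aux_circleIntegral_sum _ _ _ _ (fun i _ => hconti (fun i k => (c i k : ℂ)) (i0-1) i)]
    have hinner : ∀ i ∈ Finset.Icc 1 p,
        (∮ z in C(-(k0:ℂ), 1/2), ∑ k ∈ Finset.range (n+1),
          (c i k : ℂ) * ((z + (k:ℂ)) ^ (-(i:ℤ)) * (z + (k0:ℂ)) ^ (i0 - 1)))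
        = ∑ k ∈ Finset.range (n+1), (c i k : ℂ) *
            (if k = k0 ∧ i = (i0 - 1) + 1 then 2 * Real.pi * Complex.I else 0) := by
      intro i hii
      rw [aux_circleIntegral_sum _ _ _ _ (fun k _ => hcontik (i0-1) i k)]
      refine Finset.sum_congr rfl fun k _ => ?_
      rw [circleIntegral.integral_const_mul]
      rw [aux_key_integral k0 k (i0-1) i (Finset.mem_Icc.mp hii).1 (fun _ => trivial)]
    rw [Finset.sum_congr rfl hinner]
    have hsub : (i0 - 1) + 1 = i0 := Nat.sub_add_cancel hi0
    rw [show (∑ i ∈ Finset.Icc 1 p, ∑ k ∈ Finset.range (n+1), (c i k : ℂ) *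
        (if k = k0 ∧ i = (i0 - 1) + 1 then 2 * Real.pi * Complex.I else 0))
      = ∑ i ∈ Finset.Icc 1 p, ∑ k ∈ Finset.range (n+1), (c i k : ℂ) *
        (if k = k0 ∧ i = i0 then 2 * Real.pi * Complex.I else 0) by rw [hsub]]
    rw [Finset.sum_eq_single i0]
    · rw [Finset.sum_eq_single k0]
      · rw [if_pos ⟨rfl, rfl⟩]
        ring
      · intro k hk hkne
        simp [hkne]
      · intro hk
        exact absurd (Finset.mem_range.mpr (Nat.lt_succ_of_le hk0)) hk
    · intro i hi hine
      apply Finset.sum_eq_zero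
      intro k hk
      simp [hine]
    · intro hi
      exact absurd (Finset.mem_Icc.mpr ⟨hi0, hi0p⟩) hi
  -- bound the integral
  have hbound : ‖∮ z in C(-(k0:ℂ), 1/2), g z * (z + (k0:ℂ)) ^ (i0 - 1)‖
      ≤ 2 * Real.pi * (1/2) * M := by
    refine circleIntegral.norm_integral_le_of_norm_le_const (by norm_num) ?_
    intro z hz
    rw [norm_mul, norm_pow, aux_sphere_norm hz]
    calc ‖g z‖ * (1/2:ℝ) ^ (i0 - 1) ≤ M * 1 := by
          refine mul_le_mul (hgM z hz) ?_ (by positivity) hM0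
          exact pow_le_one₀ (by norm_num) (by norm_num)
      _ = M := mul_one M
  rw [hInt] at hbound
  have hpi : (0:ℝ) < Real.pi := Real.pi_pos
  have hre : (2:ℂ) * (Real.pi:ℂ) * Complex.I * ((c i0 k0 : ℚ):ℂ)
      = (((2*Real.pi):ℝ):ℂ) * (Complex.I * ((c i0 k0 : ℚ):ℂ)) := by
    push_cast
    ring
  rw [hre, norm_mul, norm_mul, Complex.norm_real, Complex.norm_I, Real.norm_eq_abs, one_mul,
    abs_of_pos (by positivity : (0:ℝ) < 2*Real.pi), Complex.norm_ratCast] at hbound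
  nlinarith [abs_nonneg ((c i0 k0 : ℚ) : ℝ)]

noncomputable def numA (s δ n : ℕ) : Polynomial ℚ :=
  Polynomial.C ((2:ℚ) ^ ((6*s+12)*n)) * (Polynomial.C 4 * Polynomial.X + Polynomial.C (2*(n:ℚ))) ^ δ *
    (∏ j ∈ Finset.range n, (Polynomial.X + Polynomial.C ((j:ℚ) + 1/4))) ^ (s+2) *
    (∏ j ∈ Finset.range n, (Polynomial.X + Polynomial.C ((j:ℚ) + 3/4))) ^ (s+2)

noncomputable def numB (s n : ℕ) : Polynomial ℚ :=
  Polynomial.C ((2:ℚ) ^ ((3*s+6)*n)) *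
    (∏ j ∈ Finset.range n, (Polynomial.X + Polynomial.C ((j:ℚ) + 3/4))) ^ (s+2)

lemma aux_poch_prod (t c : ℚ) (n : ℕ) : poch (t + c) n = ∏ j ∈ Finset.range n, (t + ((j:ℚ) + c)) := by
  rw [poch]
  exact Finset.prod_congr rfl fun j _ => by ring

lemma aux_poch_den (t : ℚ) (n : ℕ) : poch t (n+1) = ∏ k ∈ Finset.range (n+1), (t + (k:ℚ)) := rfl

lemma aux_evalA (s δ n : ℕ) (t : ℚ) (ht : ∀ k : ℕ, k ≤ n → t + (k:ℚ) ≠ 0) :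
    Polynomial.eval t (numA s δ n)
      = Afun s δ n t * (∏ k ∈ Finset.range (n+1), (t + (k:ℚ))) ^ (2*s+4) := by
  have hden : poch t (n+1) ≠ 0 := by
    rw [aux_poch_den]
    exact Finset.prod_ne_zero_iff.mpr fun k hk =>
      ht k (Nat.lt_succ_iff.mp (Finset.mem_range.mp hk))
  rw [Afun, ← aux_poch_den, div_mul_cancel₀ _ (pow_ne_zero _ hden)]
  rw [numA]
  simp only [Polynomial.eval_mul, Polynomial.eval_pow, Polynomial.eval_prod, Polynomial.eval_add,
    Polynomial.eval_X, Polynomial.eval_C]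
  rw [aux_poch_prod t (1/4) n, aux_poch_prod t (3/4) n]

lemma aux_evalB (s n : ℕ) (t : ℚ) (ht : ∀ k : ℕ, k ≤ n → t + (k:ℚ) ≠ 0) :
    Polynomial.eval t (numB s n)
      = Bfun s n t * (∏ k ∈ Finset.range (n+1), (t + (k:ℚ))) ^ (s+2) := by
  have hden : poch t (n+1) ≠ 0 := by
    rw [aux_poch_den]
    exact Finset.prod_ne_zero_iff.mpr fun k hk =>
      ht k (Nat.lt_succ_iff.mp (Finset.mem_range.mp hk))
  rw [Bfun, ← aux_poch_den, div_mul_cancel₀ _ (pow_ne_zero _ hden)]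
  rw [numB]
  simp only [Polynomial.eval_mul, Polynomial.eval_pow, Polynomial.eval_prod, Polynomial.eval_add,
    Polynomial.eval_X, Polynomial.eval_C]
  rw [aux_poch_prod t (3/4) n]

noncomputable def MA (s n : ℕ) : ℝ := 2^((6*s+12)*n) * (6*(n:ℝ)+2) * (4*((n:ℝ)+2)^4)^(s+2)

noncomputable def MB (s n : ℕ) : ℝ := 2^((3*s+6)*n) * (2*((n:ℝ)+2)^2)^(s+2)

lemma aux_aevalA (s δ n : ℕ) (z : ℂ) :
    (Polynomial.aeval z (numA s δ n) : ℂ)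
      = ((2:ℂ) ^ ((6*s+12)*n)) * (4*z + 2*(n:ℂ)) ^ δ *
        (∏ j ∈ Finset.range n, (z + (j:ℂ) + 1/4)) ^ (s+2) *
        (∏ j ∈ Finset.range n, (z + ((j:ℕ)+1:ℕ) + (-(1/4):ℂ))) ^ (s+2) := by
  rw [numA]
  simp only [map_mul, map_pow, map_prod, map_add, Polynomial.aeval_X, Polynomial.aeval_C,
    eq_ratCast]
  push_cast
  rw [show ∏ x ∈ Finset.range n, (z + ((x:ℂ) + 1/4))
      = ∏ j ∈ Finset.range n, (z + (j:ℂ) + 1/4) from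
    Finset.prod_congr rfl fun j _ => by ring]
  rw [show ∏ x ∈ Finset.range n, (z + ((x:ℂ) + 3/4))
      = ∏ j ∈ Finset.range n, (z + ((j:ℂ) + 1) + -(1/4)) from
    Finset.prod_congr rfl fun j _ => by ring]

lemma aux_aevalB (s n : ℕ) (z : ℂ) :
    (Polynomial.aeval z (numB s n) : ℂ)
      = ((2:ℂ) ^ ((3*s+6)*n)) *
        (∏ j ∈ Finset.range n, (z + ((j:ℕ)+1:ℕ) + (-(1/4):ℂ))) ^ (s+2) := by
  rw [numB]
  simp only [map_mul, map_pow, map_prod, map_add, Polynomial.aeval_X, Polynomial.aeval_C,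
    eq_ratCast]
  push_cast
  rw [show ∏ x ∈ Finset.range n, (z + ((x:ℂ) + 3/4))
      = ∏ j ∈ Finset.range n, (z + ((j:ℂ) + 1) + -(1/4)) from
    Finset.prod_congr rfl fun j _ => by ring]

lemma aux_norm_two_pow (c : ℕ) : ‖(2:ℂ)^c‖ = (2:ℝ)^c := by
  rw [norm_pow]
  norm_num

lemma aux_normz {k0 : ℕ} {z : ℂ} (hz : z ∈ Metric.sphere (-(k0:ℂ)) (1/2)) (hn : k0 ≤ k0) :
    ‖z‖ ≤ (k0:ℝ) + 1/2 := by
  have h1 : z = (z + (k0:ℂ)) - (k0:ℂ) := by ring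
  calc ‖z‖ = ‖(z + (k0:ℂ)) - (k0:ℂ)‖ := by rw [← h1]
    _ ≤ ‖z + (k0:ℂ)‖ + ‖(k0:ℂ)‖ := norm_sub_le _ _
    _ = 1/2 + k0 := by rw [aux_sphere_norm hz, Complex.norm_natCast]
    _ = (k0:ℝ) + 1/2 := by ring

lemma aux_norm_lin {n k0 : ℕ} (hk0 : k0 ≤ n) {z : ℂ} (hz : z ∈ Metric.sphere (-(k0:ℂ)) (1/2)) :
    ‖4*z + 2*(n:ℂ)‖ ≤ 6*(n:ℝ) + 2 := by
  calc ‖4*z + 2*(n:ℂ)‖ ≤ ‖4*z‖ + ‖2*(n:ℂ)‖ := norm_add_le _ _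
    _ = 4*‖z‖ + 2*(n:ℝ) := by
        rw [norm_mul, norm_mul, Complex.norm_natCast]
        norm_num
    _ ≤ 4*((k0:ℝ) + 1/2) + 2*(n:ℝ) := by
        have := aux_normz hz le_rfl
        linarith
    _ ≤ 6*(n:ℝ) + 2 := by
        have : (k0:ℝ) ≤ (n:ℝ) := by exact_mod_cast hk0
        linarith

lemma aux_normA {s δ n k0 : ℕ} (hδ : δ ≤ 1) (hk0 : k0 ≤ n) {z : ℂ}
    (hz : z ∈ Metric.sphere (-(k0:ℂ)) (1/2)) :
    ‖(Polynomial.aeval z (numA s δ n) : ℂ)‖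
      ≤ MA s n * (∏ k ∈ Finset.range (n+1), ‖z + (k:ℂ)‖) ^ (2*s+4) := by
  rw [aux_aevalA]
  simp only [norm_mul, norm_pow, norm_prod, RCLike.norm_ofNat]
  have hD : (0:ℝ) < ∏ k ∈ Finset.range (n+1), ‖z + (k:ℂ)‖ :=
    Finset.prod_pos fun k _ => lt_of_lt_of_le (by norm_num) (aux_norm_lower hz k).2
  have hX1 : (0:ℝ) ≤ ∏ j ∈ Finset.range n, ‖z + (j:ℂ) + 1/4‖ :=
    Finset.prod_nonneg fun j _ => norm_nonneg _
  have hX2 : (0:ℝ) ≤ ∏ j ∈ Finset.range n, ‖z + ((j:ℕ)+1:ℕ) + (-(1/4):ℂ)‖ :=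
    Finset.prod_nonneg fun j _ => norm_nonneg _
  have hlin : ‖4*z + 2*(n:ℂ)‖^δ ≤ 6*(n:ℝ) + 2 := by
    have h1 : (1:ℝ) ≤ 6*(n:ℝ) + 2 := by
      have : (0:ℝ) ≤ (n:ℝ) := Nat.cast_nonneg n
      linarith
    calc ‖4*z + 2*(n:ℂ)‖^δ ≤ (6*(n:ℝ) + 2)^δ :=
          pow_le_pow_left₀ (norm_nonneg _) (aux_norm_lin hk0 hz) δ
      _ ≤ (6*(n:ℝ) + 2)^1 := pow_le_pow_right₀ h1 hδ
      _ = 6*(n:ℝ) + 2 := pow_one _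
  have hprod : (∏ j ∈ Finset.range n, ‖z + (j:ℂ) + 1/4‖) ^ (s+2) *
      (∏ j ∈ Finset.range n, ‖z + ((j:ℕ)+1:ℕ) + (-(1/4):ℂ)‖) ^ (s+2)
      ≤ (4*((n:ℝ)+2)^4)^(s+2) * (∏ k ∈ Finset.range (n+1), ‖z + (k:ℂ)‖) ^ (2*s+4) := by
    have h2 := aux_prodA hk0 hz
    calc (∏ j ∈ Finset.range n, ‖z + (j:ℂ) + 1/4‖) ^ (s+2) *
        (∏ j ∈ Finset.range n, ‖z + ((j:ℕ)+1:ℕ) + (-(1/4):ℂ)‖) ^ (s+2)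
        = ((∏ j ∈ Finset.range n, ‖z + (j:ℂ) + 1/4‖) *
            ∏ j ∈ Finset.range n, ‖z + ((j:ℕ)+1:ℕ) + (-(1/4):ℂ)‖) ^ (s+2) := (mul_pow _ _ _).symm
      _ ≤ (4*((n:ℝ)+2)^4 * (∏ k ∈ Finset.range (n+1), ‖z + (k:ℂ)‖)^2) ^ (s+2) :=
          pow_le_pow_left₀ (mul_nonneg hX1 hX2) h2 _
      _ = (4*((n:ℝ)+2)^4)^(s+2) * (∏ k ∈ Finset.range (n+1), ‖z + (k:ℂ)‖) ^ (2*s+4) := by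
          rw [mul_pow, ← pow_mul, show 2*(s+2) = 2*s+4 from by ring]
  rw [MA]
  calc (2:ℝ)^((6*s+12)*n) * ‖4*z + 2*(n:ℂ)‖^δ *
        (∏ j ∈ Finset.range n, ‖z + (j:ℂ) + 1/4‖) ^ (s+2) *
        (∏ j ∈ Finset.range n, ‖z + ((j:ℕ)+1:ℕ) + (-(1/4):ℂ)‖) ^ (s+2)
      = (2:ℝ)^((6*s+12)*n) * ‖4*z + 2*(n:ℂ)‖^δ *
        ((∏ j ∈ Finset.range n, ‖z + (j:ℂ) + 1/4‖) ^ (s+2) *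
         (∏ j ∈ Finset.range n, ‖z + ((j:ℕ)+1:ℕ) + (-(1/4):ℂ)‖) ^ (s+2)) := by ring
    _ ≤ (2:ℝ)^((6*s+12)*n) * (6*(n:ℝ)+2) *
        ((4*((n:ℝ)+2)^4)^(s+2) * (∏ k ∈ Finset.range (n+1), ‖z + (k:ℂ)‖) ^ (2*s+4)) := by
        refine mul_le_mul (mul_le_mul_of_nonneg_left hlin (by positivity)) hprod ?_ ?_
        · exact mul_nonneg (pow_nonneg hX1 _) (pow_nonneg hX2 _)
        · positivity
    _ = 2^((6*s+12)*n) * (6*(n:ℝ)+2) * (4*((n:ℝ)+2)^4)^(s+2) *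
        (∏ k ∈ Finset.range (n+1), ‖z + (k:ℂ)‖) ^ (2*s+4) := by ring

lemma aux_normB {s n k0 : ℕ} (hk0 : k0 ≤ n) {z : ℂ}
    (hz : z ∈ Metric.sphere (-(k0:ℂ)) (1/2)) :
    ‖(Polynomial.aeval z (numB s n) : ℂ)‖
      ≤ MB s n * (∏ k ∈ Finset.range (n+1), ‖z + (k:ℂ)‖) ^ (s+2) := by
  rw [aux_aevalB]
  simp only [norm_mul, norm_pow, norm_prod, RCLike.norm_ofNat]
  have hD : (0:ℝ) < ∏ k ∈ Finset.range (n+1), ‖z + (k:ℂ)‖ :=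
    Finset.prod_pos fun k _ => lt_of_lt_of_le (by norm_num) (aux_norm_lower hz k).2
  have hX2 : (0:ℝ) ≤ ∏ j ∈ Finset.range n, ‖z + ((j:ℕ)+1:ℕ) + (-(1/4):ℂ)‖ :=
    Finset.prod_nonneg fun j _ => norm_nonneg _
  have hprod : (∏ j ∈ Finset.range n, ‖z + ((j:ℕ)+1:ℕ) + (-(1/4):ℂ)‖) ^ (s+2)
      ≤ (2*((n:ℝ)+2)^2)^(s+2) * (∏ k ∈ Finset.range (n+1), ‖z + (k:ℂ)‖) ^ (s+2) := by
    calc (∏ j ∈ Finset.range n, ‖z + ((j:ℕ)+1:ℕ) + (-(1/4):ℂ)‖) ^ (s+2)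
        ≤ (2*((n:ℝ)+2)^2 * ∏ k ∈ Finset.range (n+1), ‖z + (k:ℂ)‖) ^ (s+2) :=
          pow_le_pow_left₀ hX2 (aux_prodB hk0 hz) _
      _ = (2*((n:ℝ)+2)^2)^(s+2) * (∏ k ∈ Finset.range (n+1), ‖z + (k:ℂ)‖) ^ (s+2) :=
          mul_pow _ _ _
  rw [MB]
  calc (2:ℝ)^((3*s+6)*n) * (∏ j ∈ Finset.range n, ‖z + ((j:ℕ)+1:ℕ) + (-(1/4):ℂ)‖) ^ (s+2)
      ≤ (2:ℝ)^((3*s+6)*n) *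
        ((2*((n:ℝ)+2)^2)^(s+2) * (∏ k ∈ Finset.range (n+1), ‖z + (k:ℂ)‖) ^ (s+2)) :=
        mul_le_mul_of_nonneg_left hprod (by positivity)
    _ = 2^((3*s+6)*n) * (2*((n:ℝ)+2)^2)^(s+2) *
        (∏ k ∈ Finset.range (n+1), ‖z + (k:ℂ)‖) ^ (s+2) := by ring

noncomputable def CC (s : ℕ) : ℝ := (2*(s:ℝ)+4) * (3*(s:ℝ)+5)^(s+1) * (4:ℝ)^(3*s+5)

lemma aux_poch_cast (α : ℚ) (m : ℕ) :
    ((poch α m : ℚ) : ℝ) = ∏ t ∈ Finset.range m, ((α:ℝ) + t) := by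
  rw [poch]
  push_cast
  rfl

lemma aux_poch_bound (s i' : ℕ) (h : i' ≤ 2*s+4) :
    |((poch (i':ℚ) (s+1) : ℚ) : ℝ)| ≤ (3*(s:ℝ)+5)^(s+1) := by
  rw [aux_poch_cast]
  have hnn : ∀ t ∈ Finset.range (s+1), (0:ℝ) ≤ (((i':ℚ):ℝ) + t) := by
    intro t _
    positivity
  rw [abs_of_nonneg (Finset.prod_nonneg hnn)]
  have hle : ∀ t ∈ Finset.range (s+1), (((i':ℚ):ℝ) + t) ≤ 3*(s:ℝ)+5 := by
    intro t ht
    have h1 : ((i':ℚ):ℝ) = (i':ℝ) := by push_cast; rfl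
    have h2 : (i':ℝ) ≤ 2*(s:ℝ)+4 := by exact_mod_cast h
    have h3 : (t:ℝ) ≤ (s:ℝ) := by exact_mod_cast Nat.lt_succ_iff.mp (Finset.mem_range.mp ht)
    rw [h1]
    linarith
  calc ∏ t ∈ Finset.range (s+1), (((i':ℚ):ℝ) + t)
      ≤ ∏ _t ∈ Finset.range (s+1), (3*(s:ℝ)+5) := Finset.prod_le_prod hnn hle
    _ = (3*(s:ℝ)+5)^(s+1) := by rw [Finset.prod_const, Finset.card_range]

lemma aux_inv_bound (s e ℓ : ℕ) (he : e ≤ 3*s+5) :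
    |((((ℓ:ℚ) + 1/4)^e : ℚ) : ℝ)|⁻¹ ≤ (4:ℝ)^(3*s+5) := by
  have h1 : ((((ℓ:ℚ) + 1/4)^e : ℚ) : ℝ) = ((ℓ:ℝ) + 1/4)^e := by push_cast; rfl
  rw [h1, abs_of_nonneg (by positivity)]
  have h2 : ((1:ℝ)/4)^e ≤ ((ℓ:ℝ) + 1/4)^e := by
    refine pow_le_pow_left₀ (by norm_num) ?_ e
    have : (0:ℝ) ≤ (ℓ:ℝ) := Nat.cast_nonneg ℓ
    linarith
  have h3 : (((ℓ:ℝ) + 1/4)^e)⁻¹ ≤ (((1:ℝ)/4)^e)⁻¹ := by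
    refine inv_anti₀ (by positivity) h2
  have h4 : (((1:ℝ)/4)^e)⁻¹ = 4^e := by
    rw [one_div, inv_pow, inv_inv]
  have h5 : (4:ℝ)^e ≤ 4^(3*s+5) := pow_le_pow_right₀ (by norm_num) he
  rw [h4] at h3
  linarith

lemma aux_combo (s n p' : ℕ) (hp' : p' ≤ 2*s+4) (a : ℕ → ℕ → ℚ) (M : ℝ) (hM0 : 0 ≤ M)
    (hab : ∀ i k : ℕ, 1 ≤ i → i ≤ p' → k ≤ n → |((a i k : ℚ) : ℝ)| ≤ M) :
    (|((((-1:ℚ))^(s+1) * ∑ i' ∈ Finset.Icc 1 p', ∑ k ∈ Finset.Icc 1 n, ∑ ℓ ∈ Finset.range k,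
        poch (i':ℚ) (s+1) * a i' k / ((ℓ:ℚ)+1/4)^(i'+s+1) : ℚ) : ℝ)| ≤ CC s * ((n:ℝ)+2)^2 * M)
    ∧ (∀ i : ℕ, 1 ≤ i → i ≤ p' →
      |((((-1:ℚ))^s * poch (i:ℚ) (s+1) * 4^(i+s) * ∑ k ∈ Finset.range (n+1), a i k : ℚ) : ℝ)|
        ≤ CC s * ((n:ℝ)+2)^2 * M) := by
  have hP : (0:ℝ) ≤ (3*(s:ℝ)+5)^(s+1) := by positivity
  have hQ : (0:ℝ) ≤ (4:ℝ)^(3*s+5) := by positivity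
  have hterm : ∀ i' k ℓ : ℕ, 1 ≤ i' → i' ≤ p' → k ≤ n →
      |((poch (i':ℚ) (s+1) * a i' k / ((ℓ:ℚ)+1/4)^(i'+s+1) : ℚ) : ℝ)|
        ≤ (3*(s:ℝ)+5)^(s+1) * M * (4:ℝ)^(3*s+5) := by
    intro i' k ℓ h1 h2 h3
    have he : i' + s + 1 ≤ 3*s+5 := by omega
    rw [Rat.cast_div, Rat.cast_mul, abs_div, abs_mul, div_eq_mul_inv]
    refine mul_le_mul (mul_le_mul (aux_poch_bound s i' (le_trans h2 hp'))
      (hab i' k h1 h2 h3) (abs_nonneg _) hP) (aux_inv_bound s (i'+s+1) ℓ he)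
      (by positivity) (by positivity)
  constructor
  · rw [Rat.cast_mul, abs_mul]
    have h1 : |((((-1:ℚ))^(s+1) : ℚ) : ℝ)| = 1 := by
      push_cast
      rw [abs_pow, abs_neg, abs_one, one_pow]
    rw [h1, one_mul]
    have hB : (0:ℝ) ≤ (3*(s:ℝ)+5)^(s+1) * M * (4:ℝ)^(3*s+5) := by positivity
    calc |((∑ i' ∈ Finset.Icc 1 p', ∑ k ∈ Finset.Icc 1 n, ∑ ℓ ∈ Finset.range k,
          poch (i':ℚ) (s+1) * a i' k / ((ℓ:ℚ)+1/4)^(i'+s+1) : ℚ) : ℝ)|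
        ≤ ∑ i' ∈ Finset.Icc 1 p', ∑ k ∈ Finset.Icc 1 n, ∑ ℓ ∈ Finset.range k,
            |((poch (i':ℚ) (s+1) * a i' k / ((ℓ:ℚ)+1/4)^(i'+s+1) : ℚ) : ℝ)| := by
          push_cast
          refine le_trans (Finset.abs_sum_le_sum_abs _ _) (Finset.sum_le_sum fun i' _ => ?_)
          refine le_trans (Finset.abs_sum_le_sum_abs _ _) (Finset.sum_le_sum fun k _ => ?_)
          exact Finset.abs_sum_le_sum_abs _ _
      _ ≤ ∑ i' ∈ Finset.Icc 1 p', ∑ k ∈ Finset.Icc 1 n, ∑ ℓ ∈ Finset.range k,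
            ((3*(s:ℝ)+5)^(s+1) * M * (4:ℝ)^(3*s+5)) := by
          refine Finset.sum_le_sum fun i' hi' => Finset.sum_le_sum fun k hk =>
            Finset.sum_le_sum fun ℓ _ => ?_
          obtain ⟨hi1, hi2⟩ := Finset.mem_Icc.mp hi'
          exact hterm i' k ℓ hi1 hi2 (Finset.mem_Icc.mp hk).2
      _ ≤ ∑ i' ∈ Finset.Icc 1 p', ∑ k ∈ Finset.Icc 1 n,
            ((n:ℝ)) * ((3*(s:ℝ)+5)^(s+1) * M * (4:ℝ)^(3*s+5)) := by
          refine Finset.sum_le_sum fun i' _ => Finset.sum_le_sum fun k hk => ?_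
          rw [Finset.sum_const, Finset.card_range, nsmul_eq_mul]
          refine mul_le_mul_of_nonneg_right ?_ hB
          exact_mod_cast (Finset.mem_Icc.mp hk).2
      _ ≤ (2*(s:ℝ)+4) * ((n:ℝ) * ((n:ℝ) * ((3*(s:ℝ)+5)^(s+1) * M * (4:ℝ)^(3*s+5)))) := by
          rw [Finset.sum_const, Finset.sum_const]
          rw [Nat.card_Icc, Nat.card_Icc]
          simp only [nsmul_eq_mul]
          have c1 : ((n+1-1 : ℕ):ℝ) ≤ (n:ℝ) := by
            norm_num
          have c2 : ((p'+1-1 : ℕ):ℝ) ≤ 2*(s:ℝ)+4 := by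
            have : ((p'+1-1:ℕ):ℝ) = (p':ℝ) := by norm_num
            rw [this]
            exact_mod_cast hp'
          have hinner : (0:ℝ) ≤ (n:ℝ) * ((3*(s:ℝ)+5)^(s+1) * M * (4:ℝ)^(3*s+5)) := by positivity
          refine mul_le_mul c2 (mul_le_mul_of_nonneg_right c1 hinner) ?_ (by positivity)
          positivity
      _ ≤ CC s * ((n:ℝ)+2)^2 * M := by
          rw [CC]
          have hsq : (n:ℝ) * (n:ℝ) ≤ ((n:ℝ)+2)^2 := by nlinarith [Nat.cast_nonneg (α := ℝ) n]
          nlinarith [mul_le_mul_of_nonneg_right hsq (by positivity :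
            (0:ℝ) ≤ (2*(s:ℝ)+4) * ((3*(s:ℝ)+5)^(s+1) * ((4:ℝ)^(3*s+5) * M)))]
  · intro i hi1 hi2
    rw [Rat.cast_mul, Rat.cast_mul, Rat.cast_mul, abs_mul, abs_mul, abs_mul]
    have h1 : |((((-1:ℚ))^s : ℚ) : ℝ)| = 1 := by
      push_cast
      rw [abs_pow, abs_neg, abs_one, one_pow]
    rw [h1, one_mul]
    have h4 : |(((4:ℚ)^(i+s) : ℚ) : ℝ)| ≤ (4:ℝ)^(3*s+5) := by
      push_cast
      rw [abs_pow]
      have : |(4:ℝ)| = 4 := by norm_num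
      rw [this]
      exact pow_le_pow_right₀ (by norm_num) (by omega)
    have hsum : |((∑ k ∈ Finset.range (n+1), a i k : ℚ) : ℝ)| ≤ ((n:ℝ)+1) * M := by
      push_cast
      calc |∑ k ∈ Finset.range (n+1), ((a i k : ℚ):ℝ)|
          ≤ ∑ k ∈ Finset.range (n+1), |((a i k : ℚ):ℝ)| := Finset.abs_sum_le_sum_abs _ _
        _ ≤ ∑ _k ∈ Finset.range (n+1), M := by
            refine Finset.sum_le_sum fun k hk => hab i k hi1 hi2 ?_
            exact Nat.lt_succ_iff.mp (Finset.mem_range.mp hk)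
        _ = ((n:ℝ)+1) * M := by
            rw [Finset.sum_const, Finset.card_range, nsmul_eq_mul]
            push_cast
            ring
    have hle : |((poch (i:ℚ) (s+1) : ℚ) : ℝ)| * |(((4:ℚ)^(i+s) : ℚ) : ℝ)| *
        |((∑ k ∈ Finset.range (n+1), a i k : ℚ) : ℝ)|
        ≤ (3*(s:ℝ)+5)^(s+1) * (4:ℝ)^(3*s+5) * (((n:ℝ)+1) * M) := by
      refine mul_le_mul (mul_le_mul (aux_poch_bound s i (le_trans hi2 hp')) h4
        (abs_nonneg _) hP) hsum (abs_nonneg _) (by positivity)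
    refine le_trans hle ?_
    have hn1 : ((n:ℝ)+1) ≤ ((n:ℝ)+2)^2 := by nlinarith [Nat.cast_nonneg (α := ℝ) n]
    have e1 : (3*(s:ℝ)+5)^(s+1) * (4:ℝ)^(3*s+5) * (((n:ℝ)+1)*M)
        ≤ (3*(s:ℝ)+5)^(s+1) * (4:ℝ)^(3*s+5) * (((n:ℝ)+2)^2*M) :=
      mul_le_mul_of_nonneg_left (mul_le_mul_of_nonneg_right hn1 hM0) (mul_nonneg hP hQ)
    have e2 : (3*(s:ℝ)+5)^(s+1) * (4:ℝ)^(3*s+5) * (((n:ℝ)+2)^2*M)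
        ≤ (2*(s:ℝ)+4) * ((3*(s:ℝ)+5)^(s+1) * (4:ℝ)^(3*s+5) * (((n:ℝ)+2)^2*M)) := by
      refine le_mul_of_one_le_left (by positivity) ?_
      have : (0:ℝ) ≤ (s:ℝ) := Nat.cast_nonneg s
      linarith
    refine le_trans e1 (le_trans e2 (le_of_eq ?_))
    rw [CC]
    ring

noncomputable def KK (s : ℕ) : ℝ := CC s * 6 * (4:ℝ)^(s+2)

lemma aux_chainA (s n : ℕ) :
    CC s * ((n:ℝ)+2)^2 * MA s n ≤ (2:ℝ)^((6*s+12)*n) * (KK s * ((n:ℝ)+2)^(4*s+11)) := by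
  rw [MA, KK]
  have hCC : 0 ≤ CC s := by rw [CC]; positivity
  have h62 : (6*(n:ℝ)+2) ≤ 6*((n:ℝ)+2) := by
    have : (0:ℝ) ≤ (n:ℝ) := Nat.cast_nonneg n
    linarith
  have hsplit : (4*((n:ℝ)+2)^4)^(s+2) = (4:ℝ)^(s+2) * ((n:ℝ)+2)^(4*s+8) := by
    rw [mul_pow, ← pow_mul, show 4*(s+2) = 4*s+8 from by ring]
  have hpow : ((n:ℝ)+2)^(4*s+11) = ((n:ℝ)+2)^2 * ((n:ℝ)+2) * ((n:ℝ)+2)^(4*s+8) := by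
    rw [show 4*s+11 = 2+1+(4*s+8) from by omega, pow_add, pow_add, pow_one]
  rw [hsplit, hpow]
  calc CC s * ((n:ℝ)+2)^2 * ((2:ℝ)^((6*s+12)*n) * (6*(n:ℝ)+2) * ((4:ℝ)^(s+2) * ((n:ℝ)+2)^(4*s+8)))
      ≤ CC s * ((n:ℝ)+2)^2 * ((2:ℝ)^((6*s+12)*n) * (6*((n:ℝ)+2)) * ((4:ℝ)^(s+2) * ((n:ℝ)+2)^(4*s+8))) := by
        gcongr
    _ = (2:ℝ)^((6*s+12)*n) * (CC s * 6 * (4:ℝ)^(s+2) * (((n:ℝ)+2)^2 * ((n:ℝ)+2) * ((n:ℝ)+2)^(4*s+8))) := by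
        ring

lemma aux_chainB (s n : ℕ) :
    CC s * ((n:ℝ)+2)^2 * MB s n ≤ (2:ℝ)^((3*s+6)*n) * (KK s * ((n:ℝ)+2)^(4*s+11)) := by
  rw [MB, KK]
  have hCC : 0 ≤ CC s := by rw [CC]; positivity
  have hn2 : (1:ℝ) ≤ (n:ℝ)+2 := by
    have : (0:ℝ) ≤ (n:ℝ) := Nat.cast_nonneg n
    linarith
  have hsplit : (2*((n:ℝ)+2)^2)^(s+2) = (2:ℝ)^(s+2) * ((n:ℝ)+2)^(2*s+4) := by
    rw [mul_pow, ← pow_mul, show 2*(s+2) = 2*s+4 from by ring]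
  rw [hsplit]
  have h24 : (2:ℝ)^(s+2) ≤ 6 * (4:ℝ)^(s+2) := by
    have h1 : (2:ℝ)^(s+2) ≤ (4:ℝ)^(s+2) := pow_le_pow_left₀ (by norm_num) (by norm_num) _
    have h2 : (0:ℝ) < (4:ℝ)^(s+2) := by positivity
    linarith
  have hp2 : ((n:ℝ)+2)^2 * ((n:ℝ)+2)^(2*s+4) ≤ ((n:ℝ)+2)^(4*s+11) := by
    rw [← pow_add]
    exact pow_le_pow_right₀ hn2 (by omega)
  calc CC s * ((n:ℝ)+2)^2 * ((2:ℝ)^((3*s+6)*n) * ((2:ℝ)^(s+2) * ((n:ℝ)+2)^(2*s+4)))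
      = (2:ℝ)^((3*s+6)*n) * (CC s * (2:ℝ)^(s+2) * (((n:ℝ)+2)^2 * ((n:ℝ)+2)^(2*s+4))) := by ring
    _ ≤ (2:ℝ)^((3*s+6)*n) * (CC s * (6 * (4:ℝ)^(s+2)) * ((n:ℝ)+2)^(4*s+11)) := by
        gcongr
    _ = (2:ℝ)^((3*s+6)*n) * (CC s * 6 * (4:ℝ)^(s+2) * ((n:ℝ)+2)^(4*s+11)) := by ring

lemma aux_eventually (s : ℕ) (ε : ℝ) (hε : 0 < ε) :
    ∃ N : ℕ, ∀ n : ℕ, N ≤ n → KK s * ((n:ℝ)+2)^(4*s+11) ≤ ((2:ℝ) ^ ε)^n := by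
  have hr : (1:ℝ) < (2:ℝ)^ε := by
    rw [show (1:ℝ) = (2:ℝ)^(0:ℝ) from (Real.rpow_zero 2).symm]
    exact Real.rpow_lt_rpow_left_iff one_lt_two |>.mpr hε
  have hrpos : (0:ℝ) < (2:ℝ)^ε := lt_trans one_pos hr
  have h0 := tendsto_pow_const_div_const_pow_of_one_lt (4*s+11) hr
  have h1 : Filter.Tendsto (fun n : ℕ => ((n+2:ℕ):ℝ)^(4*s+11) / ((2:ℝ)^ε)^(n+2))
      Filter.atTop (nhds 0) := h0.comp (Filter.tendsto_add_atTop_nat 2)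
  have h2 : Filter.Tendsto (fun n : ℕ =>
      (KK s * ((2:ℝ)^ε)^2) * (((n+2:ℕ):ℝ)^(4*s+11) / ((2:ℝ)^ε)^(n+2)))
      Filter.atTop (nhds 0) := by
    have := h1.const_mul (KK s * ((2:ℝ)^ε)^2)
    simpa using this
  have h3 : ∀ᶠ n : ℕ in Filter.atTop,
      (KK s * ((2:ℝ)^ε)^2) * (((n+2:ℕ):ℝ)^(4*s+11) / ((2:ℝ)^ε)^(n+2)) < 1 :=
    h2.eventually_lt_const one_pos
  obtain ⟨N, hN⟩ := Filter.eventually_atTop.mp h3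
  refine ⟨N, fun n hn => ?_⟩
  have h4 := hN n hn
  have h5 : ((2:ℝ)^ε)^(n+2) = ((2:ℝ)^ε)^n * ((2:ℝ)^ε)^2 := by rw [pow_add]
  have h6 : (KK s * ((2:ℝ)^ε)^2) * (((n+2:ℕ):ℝ)^(4*s+11) / ((2:ℝ)^ε)^(n+2))
      = KK s * (((n:ℝ)+2)^(4*s+11) / ((2:ℝ)^ε)^n) := by
    rw [h5]
    push_cast
    field_simp
  rw [h6] at h4
  have h7 : KK s * (((n:ℝ)+2)^(4*s+11) / ((2:ℝ)^ε)^n) ≤ 1 := le_of_lt h4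
  rw [mul_div_assoc'] at h7
  rw [div_le_one (by positivity)] at h7
  linarith

lemma aux_rpow_split (c n : ℕ) (ε : ℝ) :
    (2:ℝ) ^ (((c:ℝ) + ε) * (n:ℝ)) = (2:ℝ)^(c*n) * ((2:ℝ)^ε)^n := by
  rw [add_mul, Real.rpow_add two_pos]
  congr 1
  · rw [show ((c:ℝ) * (n:ℝ)) = (((c*n : ℕ):ℕ):ℝ) from by push_cast; ring, Real.rpow_natCast]
  · rw [← Real.rpow_natCast ((2:ℝ)^ε) n, ← Real.rpow_mul (le_of_lt two_pos), mul_comm ε (n:ℝ)]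

/-- Archimedean bounds: for every `ε > 0` and all sufficiently large `n`,
`max_{0 ≤ i ≤ 2s+4} |ρ_{n,i}| ≤ 2^{(6s+12+ε)n}` and
`max_{0 ≤ i ≤ s+2} |σ_{n,i}| ≤ 2^{(3s+6+ε)n}`. -/
theorem rho_sigma_archimedean_bounds (s δ : ℕ) (hδ : δ ≤ 1)
    (a b : ℕ → ℕ → ℕ → ℚ)
    (ha : ∀ n : ℕ, 0 < n → ∀ t : ℚ, (∀ k : ℕ, k ≤ n → t + (k : ℚ) ≠ 0) →
      Afun s δ n t = ∑ i ∈ Finset.Icc 1 (2 * s + 4), ∑ k ∈ Finset.range (n + 1),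
        a n i k / (t + (k : ℚ)) ^ i)
    (hb : ∀ n : ℕ, 0 < n → ∀ t : ℚ, (∀ k : ℕ, k ≤ n → t + (k : ℚ) ≠ 0) →
      Bfun s n t = ∑ i ∈ Finset.Icc 1 (s + 2), ∑ k ∈ Finset.range (n + 1),
        b n i k / (t + (k : ℚ)) ^ i)
    (ε : ℝ) (hε : 0 < ε) :
    ∃ N : ℕ, ∀ n : ℕ, N ≤ n →
      (∀ i : ℕ, i ≤ 2 * s + 4 →
        ((|rhoCoef s n (a n) i| : ℚ) : ℝ) ≤
          (2 : ℝ) ^ ((((6 * s + 12 : ℕ) : ℝ) + ε) * (n : ℝ))) ∧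
      (∀ i : ℕ, i ≤ s + 2 →
        ((|sigmaCoef s n (b n) i| : ℚ) : ℝ) ≤
          (2 : ℝ) ^ ((((3 * s + 6 : ℕ) : ℝ) + ε) * (n : ℝ))) := by
  obtain ⟨N1, hN1⟩ := aux_eventually s ε hε
  refine ⟨max N1 1, fun n hn => ?_⟩
  have hn1 : 0 < n := lt_of_lt_of_le one_pos (le_trans (le_max_right N1 1) hn)
  have hnN1 : N1 ≤ n := le_trans (le_max_left N1 1) hn
  have hMA0 : 0 ≤ MA s n := by rw [MA]; positivity
  have hMB0 : 0 ≤ MB s n := by rw [MB]; positivity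
  have haB : ∀ i k : ℕ, 1 ≤ i → i ≤ 2*s+4 → k ≤ n → |((a n i k : ℚ) : ℝ)| ≤ MA s n :=
    aux_coeff_bound (2*s+4) n (a n) (numA s δ n) (MA s n)
      (fun t ht => by rw [aux_evalA s δ n t ht, ha n hn1 t ht])
      (fun k0 hk0 z hz => aux_normA hδ hk0 hz)
  have hbB : ∀ i k : ℕ, 1 ≤ i → i ≤ s+2 → k ≤ n → |((b n i k : ℚ) : ℝ)| ≤ MB s n :=
    aux_coeff_bound (s+2) n (b n) (numB s n) (MB s n)
      (fun t ht => by rw [aux_evalB s n t ht, hb n hn1 t ht])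
      (fun k0 hk0 z hz => aux_normB hk0 hz)
  have hrho := aux_combo s n (2*s+4) le_rfl (a n) (MA s n) hMA0 haB
  have hsigma := aux_combo s n (s+2) (by omega) (b n) (MB s n) hMB0 hbB
  constructor
  · intro i hi
    rw [Rat.cast_abs]
    have hbd : |((rhoCoef s n (a n) i : ℚ) : ℝ)| ≤ CC s * ((n:ℝ)+2)^2 * MA s n := by
      rw [rhoCoef]
      split_ifs with h0
      · exact hrho.1
      · exact hrho.2 i (Nat.one_le_iff_ne_zero.mpr h0) hi
    rw [aux_rpow_split (6*s+12) n ε]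
    calc |((rhoCoef s n (a n) i : ℚ) : ℝ)| ≤ CC s * ((n:ℝ)+2)^2 * MA s n := hbd
      _ ≤ (2:ℝ)^((6*s+12)*n) * (KK s * ((n:ℝ)+2)^(4*s+11)) := aux_chainA s n
      _ ≤ (2:ℝ)^((6*s+12)*n) * ((2:ℝ)^ε)^n :=
          mul_le_mul_of_nonneg_left (hN1 n hnN1) (by positivity)
  · intro i hi
    rw [Rat.cast_abs]
    have hbd : |((sigmaCoef s n (b n) i : ℚ) : ℝ)| ≤ CC s * ((n:ℝ)+2)^2 * MB s n := by
      rw [sigmaCoef]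
      split_ifs with h0
      · exact hsigma.1
      · exact hsigma.2 i (Nat.one_le_iff_ne_zero.mpr h0) hi
    rw [aux_rpow_split (3*s+6) n ε]
    calc |((sigmaCoef s n (b n) i : ℚ) : ℝ)| ≤ CC s * ((n:ℝ)+2)^2 * MB s n := hbd
      _ ≤ (2:ℝ)^((3*s+6)*n) * (KK s * ((n:ℝ)+2)^(4*s+11)) := aux_chainB s n
      _ ≤ (2:ℝ)^((3*s+6)*n) * ((2:ℝ)^ε)^n :=
          mul_le_mul_of_nonneg_left (hN1 n hnN1) (by positivity)
end

section
/- Let m ≥ 2 be an integer, n = 2^m − 1, and k₀ = 2^{m−1}. Then for every integer k with 1 ≤ k ≤ n and k ≠ k₀, one has v₂((k−1)! · (n−k)!) ≥ v₂((k₀−1)! · (n−k₀)!) + 1, where v₂ denotes the 2-adic valuation. -/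
private def s2 (x : ℕ) : ℕ := (Nat.digits 2 x).sum

private lemma s2_zero : s2 0 = 0 := by simp [s2]

private lemma s2_two_mul (x : ℕ) : s2 (2 * x) = s2 x := by
  rcases Nat.eq_zero_or_pos x with h | h
  · simp [h, s2]
  · unfold s2
    rw [Nat.digits_def' (by norm_num) (by omega)]
    simp [Nat.mul_div_cancel_left _ (by norm_num : 0 < 2), Nat.mul_mod_right]

private lemma s2_two_mul_add_one (x : ℕ) : s2 (2 * x + 1) = s2 x + 1 := by
  unfold s2
  rw [Nat.digits_def' (by norm_num) (by omega)]
  have h1 : (2 * x + 1) % 2 = 1 := by omega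
  have h2 : (2 * x + 1) / 2 = x := by omega
  rw [h1, h2, List.sum_cons]; omega

private lemma s2_pow_sub_one (t : ℕ) : s2 (2 ^ t - 1) = t := by
  induction t with
  | zero => simp [s2]
  | succ t ih =>
    have h : 2 ^ (t + 1) - 1 = 2 * (2 ^ t - 1) + 1 := by
      have := Nat.one_le_two_pow (n := t); ring_nf; omega
    rw [h, s2_two_mul_add_one, ih]

private lemma s2_split_pow_sub_one (t : ℕ) : ∀ a b : ℕ, a + b = 2 ^ t - 1 →
    s2 a + s2 b = t := by
  induction t with
  | zero =>
    intro a b h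
    simp at h
    have ha : a = 0 := by omega
    have hb : b = 0 := by omega
    simp [ha, hb, s2_zero]
  | succ t ih =>
    intro a b h
    have hp : (2:ℕ) ^ (t + 1) = 2 * 2 ^ t := by ring
    have hp1 : (1:ℕ) ≤ 2 ^ t := Nat.one_le_two_pow
    rcases Nat.even_or_odd a with ⟨a', ha⟩ | ⟨a', ha⟩
    · -- a even, so b odd
      obtain ⟨b', hb⟩ : ∃ b', b = 2 * b' + 1 := ⟨b / 2, by omega⟩
      have hab : a' + b' = 2 ^ t - 1 := by omega
      rw [ha, hb, (by ring : a' + a' = 2 * a'), s2_two_mul, s2_two_mul_add_one]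
      have := ih a' b' hab; omega
    · obtain ⟨b', hb⟩ : ∃ b', b = 2 * b' := ⟨b / 2, by omega⟩
      have hab : a' + b' = 2 ^ t - 1 := by omega
      rw [ha, hb, s2_two_mul, s2_two_mul_add_one]
      have := ih a' b' hab; omega

private lemma s2_key (t : ℕ) (ht : 2 ≤ t) : ∀ a b : ℕ, a + b = 2 ^ t - 2 →
    a ≠ 2 ^ (t - 1) - 1 → s2 a + s2 b + 3 ≤ 2 * t := by
  induction t, ht using Nat.le_induction with
  | base =>
    intro a b h ha
    norm_num at h ha
    have hs1 : s2 1 = 1 := by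
      have := s2_two_mul_add_one 0; simpa [s2_zero] using this
    have hs2 : s2 2 = 1 := by
      have := s2_two_mul 1; simpa [hs1] using this
    have : a = 0 ∧ b = 2 ∨ a = 2 ∧ b = 0 := by omega
    rcases this with ⟨ha', hb'⟩ | ⟨ha', hb'⟩ <;> simp [ha', hb', s2_zero, hs2]
  | succ t ht ih =>
    intro a b h ha
    have hp : (2:ℕ) ^ (t + 1) = 2 * 2 ^ t := by ring
    have hp' : (2:ℕ) ^ t = 2 * 2 ^ (t - 1) := by
      rw [← pow_succ']; congr 1; omega
    have hp1 : (1:ℕ) ≤ 2 ^ (t - 1) := Nat.one_le_two_pow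
    rcases Nat.even_or_odd a with ⟨a', haa⟩ | ⟨a', haa⟩
    · -- both even
      obtain ⟨b', hb⟩ : ∃ b', b = 2 * b' := ⟨b / 2, by omega⟩
      have hab : a' + b' = 2 ^ t - 1 := by omega
      have := s2_split_pow_sub_one t a' b' hab
      rw [haa, hb, (by ring : a' + a' = 2 * a'), s2_two_mul, s2_two_mul]
      omega
    · -- both odd
      obtain ⟨b', hb⟩ : ∃ b', b = 2 * b' + 1 := ⟨b / 2, by omega⟩
      have hab : a' + b' = 2 ^ t - 2 := by omega
      have ha' : a' ≠ 2 ^ (t - 1) - 1 := by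
        intro hc
        apply ha
        simp only [Nat.add_sub_cancel]
        omega
      have := ih a' b' hab ha'
      rw [haa, hb, s2_two_mul_add_one, s2_two_mul_add_one]
      omega

private lemma padic_fact (x : ℕ) : padicValNat 2 x.factorial = x - s2 x := by
  have := @sub_one_mul_padicValNat_factorial 2 ⟨Nat.prime_two⟩ x
  simpa [s2] using this

/-- For `n = 2^m - 1` (`m ≥ 2`) and `k₀ = 2^{m-1}`: for every `1 ≤ k ≤ n` with `k ≠ k₀`,
`v₂((k-1)! (n-k)!) ≥ v₂((k₀-1)! (n-k₀)!) + 1`. -/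
theorem two_adic_valuation_factorial_product (m : ℕ) (hm : 2 ≤ m)
    (n k₀ : ℕ) (hn : n = 2 ^ m - 1) (hk₀ : k₀ = 2 ^ (m - 1))
    (k : ℕ) (hk1 : 1 ≤ k) (hk2 : k ≤ n) (hk3 : k ≠ k₀) :
    padicValNat 2 ((k₀ - 1).factorial * (n - k₀).factorial) + 1 ≤
      padicValNat 2 ((k - 1).factorial * (n - k).factorial) := by
  haveI : Fact (Nat.Prime 2) := ⟨Nat.prime_two⟩
  rw [padicValNat.mul (Nat.factorial_ne_zero _) (Nat.factorial_ne_zero _),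
      padicValNat.mul (Nat.factorial_ne_zero _) (Nat.factorial_ne_zero _),
      padic_fact, padic_fact, padic_fact, padic_fact]
  have hp : (2:ℕ) ^ m = 2 * 2 ^ (m - 1) := by
    rw [← pow_succ']; congr 1; omega
  have hP2 : (2:ℕ) ≤ 2 ^ (m - 1) := by
    calc (2:ℕ) = 2 ^ 1 := rfl
    _ ≤ 2 ^ (m - 1) := Nat.pow_le_pow_right (by norm_num) (by omega)
  have hk₀1 : k₀ - 1 = 2 ^ (m - 1) - 1 := by omega
  have hnk₀ : n - k₀ = 2 ^ (m - 1) - 1 := by omega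
  rw [hk₀1, hnk₀, s2_pow_sub_one]
  have hkey : s2 (k - 1) + s2 (n - k) + 3 ≤ 2 * m := by
    apply s2_key m hm
    · omega
    · omega
  have h1 : s2 (k - 1) ≤ k - 1 := Nat.digit_sum_le 2 (k - 1)
  have h2 : s2 (n - k) ≤ n - k := Nat.digit_sum_le 2 (n - k)
  have hm2 : m - 1 < 2 ^ (m - 1) := Nat.lt_two_pow_self (n := m - 1)
  omega
end
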